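/- arXiv:1607.07598 — 13 statements merged into one kernel-verified Lean document; each statement's English description precedes it below -/
import Mathlib

section
/- Let f : 2^S → ℝ be submodular and g : 2^S → ℝ be supermodular on a finite set S. If A and B are subsets both achieving the maximum value ρ* of the density ρ(X) = g(X)/f(X) over nonempty subsets (with f positive on nonempty sets), then A ∪ B and A ∩ B (if nonempty) also achieve maximum density. Consequently, the family of maximum-density subsets (together with ∅) forms a lattice. -/
open Finset

def Submodular {n : ℕ} (f : Finset (Fin n) → ℝ) : Prop :=
  ∀ A B : Finset (Fin n), f (A ∪ B) + f (A ∩ B) ≤ f A + f B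

def Supermodular {n : ℕ} (g : Finset (Fin n) → ℝ) : Prop :=
  ∀ A B : Finset (Fin n), g A + g B ≤ g (A ∪ B) + g (A ∩ B)

def MonotoneSet {n : ℕ} (f : Finset (Fin n) → ℝ) : Prop :=
  ∀ A B : Finset (Fin n), A ⊆ B → f A ≤ f B

/-- The set of elements searched up to and including `j` under search `σ`
(where `σ k` is the element searched at position `k`). -/
def searchSegment {n : ℕ} (σ : Equiv.Perm (Fin n)) (j : Fin n) : Finset (Fin n) :=
  Finset.univ.filter (fun i => σ.symm i ≤ σ.symm j)

/-- Expected search searchCost. -/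
def searchCost {n : ℕ} (f g : Finset (Fin n) → ℝ) (σ : Equiv.Perm (Fin n)) : ℝ :=
  ∑ j, (g (searchSegment σ j) - g (searchSegment σ j \ {j})) * f (searchSegment σ j)

def dual {n : ℕ} (g : Finset (Fin n) → ℝ) (A : Finset (Fin n)) : ℝ :=
  g Finset.univ - g Aᶜ

def reversePerm {n : ℕ} (σ : Equiv.Perm (Fin n)) : Equiv.Perm (Fin n) :=
  (Fin.revPerm).trans σ

def InitialSegment {n : ℕ} (σ : Equiv.Perm (Fin n)) (A : Finset (Fin n)) : Prop :=
  ∀ i j : Fin n, j ∈ A → σ.symm i ≤ σ.symm j → i ∈ A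


/-- Lemma 1 (union/intersection of maximum density sets have maximum density). -/
theorem maxDensity_lattice {n : ℕ} (f g : Finset (Fin n) → ℝ)
    (hf : Submodular f) (hfmono : MonotoneSet f) (hf0 : f ∅ = 0)
    (hfpos : ∀ A : Finset (Fin n), A.Nonempty → 0 < f A)
    (hg : Supermodular g) (hgmono : MonotoneSet g) (hg0 : g ∅ = 0)
    (hgnonneg : ∀ A : Finset (Fin n), 0 ≤ g A)
    (A B : Finset (Fin n)) (hA : A.Nonempty) (hB : B.Nonempty)
    (hAmax : ∀ C : Finset (Fin n), C.Nonempty → g C / f C ≤ g A / f A)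
    (hBmax : ∀ C : Finset (Fin n), C.Nonempty → g C / f C ≤ g B / f B) :
    (∀ C : Finset (Fin n), C.Nonempty → g C / f C ≤ g (A ∪ B) / f (A ∪ B)) ∧
    ((A ∩ B).Nonempty →
      ∀ C : Finset (Fin n), C.Nonempty → g C / f C ≤ g (A ∩ B) / f (A ∩ B)) := by
  set ρ := g A / f A with hρdef
  have hfA := hfpos A hA
  have hfB := hfpos B hB
  have hρ0 : 0 ≤ ρ := div_nonneg (hgnonneg A) hfA.le
  -- g X ≤ ρ * f X for all X
  have hle : ∀ X : Finset (Fin n), g X ≤ ρ * f X := by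
    intro X
    rcases X.eq_empty_or_nonempty with rfl | hX
    · simp [hg0, hf0]
    · have := hAmax X hX
      have hfX := hfpos X hX
      calc g X = g X / f X * f X := by field_simp
        _ ≤ ρ * f X := by
          apply mul_le_mul_of_nonneg_right this hfX.le
  have hgA : g A = ρ * f A := by rw [hρdef]; field_simp
  have hρB : g B / f B = ρ := le_antisymm (hAmax B hB) (hBmax A hA)
  have hgB : g B = ρ * f B := by
    rw [← hρB]; field_simp
  -- chain of inequalities
  have h1 : g A + g B ≤ g (A ∪ B) + g (A ∩ B) := hg A B
  have h2 : ρ * f (A ∪ B) + ρ * f (A ∩ B) ≤ ρ * f A + ρ * f B := by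
    have := hf A B
    nlinarith
  have h3 : g (A ∪ B) + g (A ∩ B) ≤ ρ * f (A ∪ B) + ρ * f (A ∩ B) :=
    add_le_add (hle _) (hle _)
  have hequ : g (A ∪ B) = ρ * f (A ∪ B) := by
    have := hle (A ∪ B); have := hle (A ∩ B); linarith [hgA, hgB]
  have heqi : g (A ∩ B) = ρ * f (A ∩ B) := by
    have := hle (A ∪ B); have := hle (A ∩ B); linarith [hgA, hgB]
  constructor
  · intro C hC
    have hU : (A ∪ B).Nonempty := hA.mono Finset.subset_union_left
    have hfU := hfpos _ hU
    have : g (A ∪ B) / f (A ∪ B) = ρ := by rw [hequ]; field_simp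
    rw [this]; exact hAmax C hC
  · intro hI C hC
    have hfI := hfpos _ hI
    have : g (A ∩ B) / f (A ∩ B) = ρ := by rw [heqi]; field_simp
    rw [this]; exact hAmax C hC
end

section
/- Let f : 2^S → ℝ be non-decreasing and g : 2^S → ℝ be supermodular on a finite set S of size n. For any two permutations π and π' of S, one has ∑_{j=1}^n (g(S_j^{π'}) − g(S_j^{π'} − j)) · f(S_j^π) ≤ ∑_{j=1}^n (g(S_j^π) − g(S_j^π − j)) · f(S_j^π), where S_j^σ denotes the set consisting of j together with all elements preceding j in the ordering σ. -/
open Finset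

namespace PIAux
variable {n : ℕ}

def seg (σ : Equiv.Perm (Fin n)) (k : ℕ) : Finset (Fin n) :=
  Finset.univ.filter (fun i => (σ.symm i : ℕ) < k)

lemma seg_zero (σ : Equiv.Perm (Fin n)) : seg σ 0 = ∅ := by simp [seg]

lemma seg_of_le (σ : Equiv.Perm (Fin n)) {k : ℕ} (h : n ≤ k) : seg σ k = Finset.univ := by
  ext i; simp only [seg, mem_filter, mem_univ, true_and, iff_true]
  exact lt_of_lt_of_le (σ.symm i).isLt h

lemma seg_mono (σ : Equiv.Perm (Fin n)) (k : ℕ) : seg σ k ⊆ seg σ (k+1) := by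
  intro i; simp only [seg, mem_filter, mem_univ, true_and]; omega

lemma searchSegment_eq (σ : Equiv.Perm (Fin n)) (j : Fin n) :
    searchSegment σ j = seg σ ((σ.symm j : ℕ) + 1) := by
  ext i
  simp only [searchSegment, seg, mem_filter, mem_univ, true_and, Fin.le_def, Nat.lt_succ_iff]

lemma not_mem_seg (σ : Equiv.Perm (Fin n)) {k : ℕ} (hk : k < n) :
    σ ⟨k, hk⟩ ∉ seg σ k := by simp [seg]

lemma seg_succ (σ : Equiv.Perm (Fin n)) {k : ℕ} (hk : k < n) :
    seg σ (k+1) = insert (σ ⟨k, hk⟩) (seg σ k) := by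
  have key : ∀ i : Fin n, i = σ ⟨k, hk⟩ ↔ (σ.symm i : ℕ) = k := by
    intro i
    rw [← Equiv.symm_apply_eq, Fin.ext_iff]
  ext i
  simp only [seg, mem_filter, mem_univ, true_and, mem_insert, key i]
  omega

lemma seg_succ_sdiff (σ : Equiv.Perm (Fin n)) {k : ℕ} (hk : k < n) :
    seg σ (k+1) \ {σ ⟨k, hk⟩} = seg σ k := by
  rw [seg_succ σ hk, Finset.sdiff_singleton_eq_erase, Finset.erase_insert (not_mem_seg σ hk)]

lemma searchSegment_apply (σ : Equiv.Perm (Fin n)) {k : ℕ} (hk : k < n) :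
    searchSegment σ (σ ⟨k, hk⟩) = seg σ (k+1) := by
  rw [searchSegment_eq]; simp

/-- supermodular step inequality -/
lemma sup_step {g : Finset (Fin n) → ℝ} (hg : Supermodular g)
    {B C : Finset (Fin n)} {j : Fin n} (hBC : B ⊆ C) (hj : j ∉ C) :
    g (insert j B) - g B ≤ g (insert j C) - g C := by
  have h := hg (insert j B) C
  have h1 : insert j B ∪ C = insert j C := by
    ext x
    simp only [mem_union, mem_insert]
    constructor
    · rintro ((rfl | hx) | hx)
      · exact Or.inl rfl
      · exact Or.inr (hBC hx)
      · exact Or.inr hx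
    · rintro (rfl | hx)
      · exact Or.inl (Or.inl rfl)
      · exact Or.inr hx
  have h2 : insert j B ∩ C = B := by
    ext x
    simp only [mem_inter, mem_insert]
    constructor
    · rintro ⟨rfl | hx, hxC⟩
      · exact absurd hxC hj
      · exact hx
    · intro hx; exact ⟨Or.inr hx, hBC hx⟩
  rw [h1, h2] at h
  linarith

/-- gain of a set is at most sum of marginal weights -/
lemma key1 {g : Finset (Fin n) → ℝ} (hg : Supermodular g) (σ : Equiv.Perm (Fin n))
    (A : Finset (Fin n)) :
    g A - g ∅ ≤ ∑ j ∈ A, (g (searchSegment σ j) - g (searchSegment σ j \ {j})) := by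
  induction A using Finset.strongInduction with
  | _ A ih =>
    rcases A.eq_empty_or_nonempty with rfl | hA
    · simp
    obtain ⟨j, hjA, hmax⟩ := A.exists_max_image (fun i => σ.symm i) hA
    have hjseg : j ∈ searchSegment σ j := by simp [searchSegment]
    have hsub : A.erase j ⊆ searchSegment σ j \ {j} := by
      intro i hi
      rw [Finset.mem_erase] at hi
      simp only [Finset.mem_sdiff, Finset.mem_singleton, searchSegment, mem_filter, mem_univ,
        true_and]
      exact ⟨hmax i hi.2, hi.1⟩
    have hstep : g A - g (A.erase j) ≤
        g (searchSegment σ j) - g (searchSegment σ j \ {j}) := by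
      have hsub' : A.erase j ⊆ (searchSegment σ j).erase j := by
        simpa only [Finset.sdiff_singleton_eq_erase] using hsub
      have hj1 : j ∉ (searchSegment σ j).erase j := Finset.notMem_erase j _
      have h := sup_step hg hsub' hj1
      rw [Finset.insert_erase hjA, Finset.insert_erase hjseg] at h
      rwa [Finset.sdiff_singleton_eq_erase]
    have hsum := Finset.add_sum_erase A
      (fun j => g (searchSegment σ j) - g (searchSegment σ j \ {j})) hjA
    have hih := ih (A.erase j) (Finset.erase_ssubset hjA)
    linarith [hsum, hih]

/-- telescoping equality along σ's own order -/
lemma Wself {g : Finset (Fin n) → ℝ} (σ : Equiv.Perm (Fin n)) :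
    ∀ k, k ≤ n →
      ∑ j ∈ seg σ k, (g (searchSegment σ j) - g (searchSegment σ j \ {j}))
        = g (seg σ k) - g ∅ := by
  intro k
  induction k with
  | zero => intro _; simp [seg_zero]
  | succ k ih =>
    intro hk
    have hkn : k < n := hk
    rw [seg_succ σ hkn, Finset.sum_insert (not_mem_seg σ hkn), ih (le_of_lt hkn),
      searchSegment_apply σ hkn, seg_succ_sdiff σ hkn, ← seg_succ σ hkn]
    ring

lemma abel (D F : ℕ → ℝ) (m : ℕ) :
    ∑ k ∈ Finset.range m, (D (k+1) - D k) * F (k+1)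
      = D m * F m - D 0 * F 0 + ∑ k ∈ Finset.range m, D k * (F k - F (k+1)) := by
  induction m with
  | zero => simp
  | succ m ih =>
    rw [Finset.sum_range_succ, Finset.sum_range_succ, ih]
    ring

def w (g : Finset (Fin n) → ℝ) (σ : Equiv.Perm (Fin n)) (j : Fin n) : ℝ :=
  g (searchSegment σ j) - g (searchSegment σ j \ {j})

def W (g : Finset (Fin n) → ℝ) (π σ : Equiv.Perm (Fin n)) (k : ℕ) : ℝ :=
  ∑ j ∈ seg π k, w g σ j

lemma W_succ (g : Finset (Fin n) → ℝ) (π σ : Equiv.Perm (Fin n)) {k : ℕ} (hk : k < n) :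
    W g π σ (k+1) = w g σ (π ⟨k, hk⟩) + W g π σ k := by
  rw [W, W, seg_succ π hk, Finset.sum_insert (not_mem_seg π hk)]

lemma W_self (g : Finset (Fin n) → ℝ) (σ : Equiv.Perm (Fin n)) {k : ℕ} (hk : k ≤ n) :
    W g σ σ k = g (seg σ k) - g ∅ :=
  Wself σ k hk

lemma W_le (g : Finset (Fin n) → ℝ) (hg : Supermodular g) (π σ : Equiv.Perm (Fin n))
    {k : ℕ} (hk : k ≤ n) : W g π π k ≤ W g π σ k := by
  rw [W_self g π hk]
  exact key1 hg σ (seg π k)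

lemma W_top (g : Finset (Fin n) → ℝ) (π σ : Equiv.Perm (Fin n)) :
    W g π σ n = g Finset.univ - g ∅ := by
  have h1 : W g π σ n = W g σ σ n := by
    rw [W, W, seg_of_le π le_rfl, seg_of_le σ le_rfl]
  rw [h1, W_self g σ le_rfl, seg_of_le σ le_rfl]

lemma reindex (f g : Finset (Fin n) → ℝ) (π σ : Equiv.Perm (Fin n)) :
    (∑ j, w g σ j * f (searchSegment π j))
      = ∑ k ∈ Finset.range n, (W g π σ (k+1) - W g π σ k) * f (seg π (k+1)) := by
  have h1 : (∑ j, w g σ j * f (searchSegment π j))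
      = ∑ k : Fin n, w g σ (π k) * f (searchSegment π (π k)) :=
    (Equiv.sum_comp π fun j => w g σ j * f (searchSegment π j)).symm
  have h2 : ∀ k : Fin n, w g σ (π k) * f (searchSegment π (π k))
      = (W g π σ ((k:ℕ)+1) - W g π σ (k:ℕ)) * f (seg π ((k:ℕ)+1)) := by
    intro k
    have hk : (k:ℕ) < n := k.isLt
    have hπk : π ⟨(k:ℕ), hk⟩ = π k := by congr 1
    have hseg : searchSegment π (π k) = seg π ((k:ℕ)+1) := by
      rw [← hπk, searchSegment_apply π hk]
    have hWd : W g π σ ((k:ℕ)+1) = w g σ (π k) + W g π σ (k:ℕ) := by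
      rw [W_succ g π σ hk, hπk]
    rw [hseg, hWd]; ring
  rw [h1, Finset.sum_congr rfl (fun k _ => h2 k)]
  exact Fin.sum_univ_eq_sum_range (fun m => (W g π σ (m+1) - W g π σ m) * f (seg π (m+1))) n

lemma main (f g : Finset (Fin n) → ℝ) (hfmono : MonotoneSet f) (hg : Supermodular g)
    (π π' : Equiv.Perm (Fin n)) :
    (∑ j, w g π' j * f (searchSegment π j)) ≤ ∑ j, w g π j * f (searchSegment π j) := by
  rw [reindex f g π π', reindex f g π π]
  set D : ℕ → ℝ := fun k => W g π π k - W g π π' k with hD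
  set F : ℕ → ℝ := fun k => f (seg π k) with hF
  have hexp : ∑ k ∈ Finset.range n, (W g π π (k+1) - W g π π k) * f (seg π (k+1))
      - ∑ k ∈ Finset.range n, (W g π π' (k+1) - W g π π' k) * f (seg π (k+1))
      = ∑ k ∈ Finset.range n, (D (k+1) - D k) * F (k+1) := by
    rw [← Finset.sum_sub_distrib]
    refine Finset.sum_congr rfl fun k _ => ?_
    simp only [hD, hF]
    ring
  have hD0 : D 0 = 0 := by
    simp only [hD, W, seg_zero, Finset.sum_empty, sub_zero]
  have hDn : D n = 0 := by
    simp only [hD, W_top]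
    ring
  have habel := abel D F n
  rw [hDn, hD0] at habel
  have hnonneg : 0 ≤ ∑ k ∈ Finset.range n, D k * (F k - F (k+1)) := by
    refine Finset.sum_nonneg fun k hk => ?_
    rw [Finset.mem_range] at hk
    have h1 : D k ≤ 0 := by
      have := W_le g hg π π' (le_of_lt hk)
      simp only [hD]
      linarith
    have h2 : F k - F (k+1) ≤ 0 := by
      have := hfmono (seg π k) (seg π (k+1)) (seg_mono π k)
      simp only [hF]
      linarith
    nlinarith [mul_nonneg (neg_nonneg.mpr h1) (neg_nonneg.mpr h2)]
  have : 0 ≤ ∑ k ∈ Finset.range n, (D (k+1) - D k) * F (k+1) := by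
    rw [habel]; simpa using hnonneg
  linarith [hexp, this]

end PIAux

/-- Lemma (pairwise interchange): mixing the weight increments from another
permutation can only decrease the total. -/
theorem perm_interchange {n : ℕ} (f g : Finset (Fin n) → ℝ)
    (hfmono : MonotoneSet f) (hg : Supermodular g)
    (π π' : Equiv.Perm (Fin n)) :
    (∑ j, (g (searchSegment π' j) - g (searchSegment π' j \ {j})) * f (searchSegment π j)) ≤
      searchCost f g π := by
  have h := PIAux.main f g hfmono hg π π'
  simpa only [searchCost, PIAux.w] using h
end

section
/- Consider the submodular search problem with non-decreasing submodular cost f and non-decreasing supermodular weight g on a finite set S, where the cost of a search (permutation) π is c(π) = ∑_j (g(S_j^π) − g(S_j^π − j)) f(S_j^π). If A ⊆ S is a nonempty subset of maximum density ρ(A) = g(A)/f(A), then there exists an optimal search π' that searches all elements of A before any element of its complement. -/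
open Finset

def InitialSegmentOf {n : ℕ} (σ : Equiv.Perm (Fin n)) (A : Finset (Fin n)) : Prop :=
  ∀ i j : Fin n, j ∈ A → σ.symm i ≤ σ.symm j → i ∈ A

section Core
variable {n : ℕ} {f g : Finset (Fin n) → ℝ} {A : Finset (Fin n)}
  {s u : ℕ → Finset (Fin n)}

-- chain hypotheses
variable (hs : ∀ i, s i ⊆ s (i+1)) (hsA : ∀ i, s i ⊆ A)
  (hu : ∀ j, u j ⊆ u (j+1)) (hud : ∀ j, ∀ x ∈ u j, x ∉ A)

lemma SMS_smono (hs : ∀ i, s i ⊆ s (i+1)) : ∀ {i i'}, i ≤ i' → s i ⊆ s i' := by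
  intro i i' h
  exact Finset.le_iff_subset.mp
    (monotone_nat_of_le_succ (fun i => Finset.le_iff_subset.mpr (hs i)) h)

lemma SMS_key_inter (hsA : ∀ i, s i ⊆ A) (hud : ∀ j, ∀ x ∈ u j, x ∉ A)
    {i₁ i₂ j₁ j₂ : ℕ} (h1 : s i₁ ⊆ s i₂) (h2 : u j₁ ⊆ u j₂) :
    (s i₁ ∪ u j₂) ∩ (s i₂ ∪ u j₁) = s i₁ ∪ u j₁ := by
  ext x
  simp only [mem_inter, mem_union]
  constructor
  · rintro ⟨h3 | h3, h4 | h4⟩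
    · exact Or.inl h3
    · exact Or.inl h3
    · exact absurd (hsA i₂ h4) (hud j₂ x h3)
    · exact Or.inr h4
  · rintro (h3 | h3)
    · exact ⟨Or.inl h3, Or.inl (h1 h3)⟩
    · exact ⟨Or.inr (h2 h3), Or.inr h3⟩

lemma SMS_key_union {i₁ i₂ j₁ j₂ : ℕ} (h1 : s i₁ ⊆ s i₂) (h2 : u j₁ ⊆ u j₂) :
    (s i₁ ∪ u j₂) ∪ (s i₂ ∪ u j₁) = s i₂ ∪ u j₂ := by
  ext x
  simp only [mem_union]
  constructor
  · rintro ((h | h) | (h | h))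
    · exact Or.inl (h1 h)
    · exact Or.inr h
    · exact Or.inl h
    · exact Or.inr (h2 h)
  · rintro (h | h)
    · exact Or.inr (Or.inl h)
    · exact Or.inl (Or.inr h)

/-- Submodular cross inequality on the grid. -/
lemma SMS_Fsub (hf : Submodular f) (hsA : ∀ i, s i ⊆ A) (hud : ∀ j, ∀ x ∈ u j, x ∉ A)
    {i₁ i₂ j₁ j₂ : ℕ} (h1 : s i₁ ⊆ s i₂) (h2 : u j₁ ⊆ u j₂) :
    f (s i₂ ∪ u j₂) + f (s i₁ ∪ u j₁) ≤ f (s i₁ ∪ u j₂) + f (s i₂ ∪ u j₁) := by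
  have := hf (s i₁ ∪ u j₂) (s i₂ ∪ u j₁)
  rwa [SMS_key_inter hsA hud h1 h2, SMS_key_union h1 h2] at this

/-- Supermodular cross inequality on the grid. -/
lemma SMS_Gsup (hg : Supermodular g) (hsA : ∀ i, s i ⊆ A) (hud : ∀ j, ∀ x ∈ u j, x ∉ A)
    {i₁ i₂ j₁ j₂ : ℕ} (h1 : s i₁ ⊆ s i₂) (h2 : u j₁ ⊆ u j₂) :
    g (s i₁ ∪ u j₂) + g (s i₂ ∪ u j₁) ≤ g (s i₂ ∪ u j₂) + g (s i₁ ∪ u j₁) := by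
  have := hg (s i₁ ∪ u j₂) (s i₂ ∪ u j₁)
  rwa [SMS_key_inter hsA hud h1 h2, SMS_key_union h1 h2] at this

/-- density bound: `g C ≤ ρ * f C` for every `C`. -/
lemma SMS_dens (hf0 : f ∅ = 0) (hg0 : g ∅ = 0)
    (hfpos : ∀ B : Finset (Fin n), B.Nonempty → 0 < f B) (hA : A.Nonempty)
    (hAmax : ∀ C : Finset (Fin n), C.Nonempty → g C / f C ≤ g A / f A)
    (C : Finset (Fin n)) : g C ≤ g A / f A * f C := by
  rcases C.eq_empty_or_nonempty with rfl | hC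
  · rw [hf0, hg0, mul_zero]
  · have hfC := hfpos C hC
    have hfA := hfpos A hA
    have := hAmax C hC
    rw [div_le_div_iff₀ hfC hfA] at this
    rw [div_mul_eq_mul_div, le_div_iff₀ hfA]
    linarith

lemma SMS_rho_nonneg (hfpos : ∀ B : Finset (Fin n), B.Nonempty → 0 < f B)
    (hgnonneg : ∀ B : Finset (Fin n), 0 ≤ g B) (hA : A.Nonempty) :
    0 ≤ g A / f A :=
  div_nonneg (hgnonneg A) (le_of_lt (hfpos A hA))

lemma SMS_gA_eq (hfpos : ∀ B : Finset (Fin n), B.Nonempty → 0 < f B) (hA : A.Nonempty) :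
    g A = g A / f A * f A := by
  rw [div_mul_cancel₀ _ (ne_of_gt (hfpos A hA))]

end Core
section Core2
variable {n : ℕ} {f g : Finset (Fin n) → ℝ} {A : Finset (Fin n)}
  {s u : ℕ → Finset (Fin n)} {m : ℕ}

/-- Tail density inequality (D1). -/
lemma SMS_densTail (hgsup : Supermodular g) (hfsub : Submodular f)
    (hf0 : f ∅ = 0) (hg0 : g ∅ = 0)
    (hfpos : ∀ B : Finset (Fin n), B.Nonempty → 0 < f B)
    (hgnonneg : ∀ B : Finset (Fin n), 0 ≤ g B) (hA : A.Nonempty)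
    (hAmax : ∀ C : Finset (Fin n), C.Nonempty → g C / f C ≤ g A / f A)
    (hs : ∀ i, s i ⊆ s (i+1)) (hsA : ∀ i, s i ⊆ A) (hsm : A ⊆ s m)
    (hu : ∀ j, u j ⊆ u (j+1)) (hu0 : u 0 = ∅) (hud : ∀ j, ∀ x ∈ u j, x ∉ A)
    {R j : ℕ} (hR : R ≤ m) :
    g A / f A * (f (s m ∪ u j) - f (s R ∪ u j)) ≤ g (s m ∪ u j) - g (s R ∪ u j) := by
  set ρ := g A / f A with hρ
  have hsmA : s m = A := subset_antisymm (hsA m) hsm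
  have hRm : s R ⊆ s m := SMS_smono hs hR
  -- supermodularity: g A + g (s R ∪ u j) ≤ g (s m ∪ u j) + g (s R)
  have h1 : g A + g (s R ∪ u j) ≤ g (s m ∪ u j) + g (s R) := by
    have := hgsup A (s R ∪ u j)
    have hun : A ∪ (s R ∪ u j) = s m ∪ u j := by
      rw [hsmA]
      ext x
      simp only [mem_union]
      constructor
      · rintro (h | h | h)
        · exact Or.inl h
        · exact Or.inl (hsA R h)
        · exact Or.inr h
      · rintro (h | h)
        · exact Or.inl h
        · exact Or.inr (Or.inr h)
    have hin : A ∩ (s R ∪ u j) = s R := by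
      ext x
      simp only [mem_inter, mem_union]
      constructor
      · rintro ⟨h1, h2 | h2⟩
        · exact h2
        · exact absurd h1 (hud j x h2)
      · intro h
        exact ⟨hsA R h, Or.inl h⟩
    rwa [hun, hin] at this
  -- density: g (s R) ≤ ρ f (s R), g A = ρ f A
  have h2 : g (s R) ≤ ρ * f (s R) := SMS_dens hf0 hg0 hfpos hA hAmax (s R)
  have h3 : g A = ρ * f A := SMS_gA_eq hfpos hA
  -- submodularity: f A - f (s R) ≥ f (s m ∪ u j) - f (s R ∪ u j)
  have h4 : f (s m ∪ u j) + f (s R ∪ u 0) ≤ f (s R ∪ u j) + f (s m ∪ u 0) :=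
    SMS_Fsub hfsub hsA hud hRm (by rw [hu0]; exact empty_subset _)
  rw [hu0, union_empty, union_empty, hsmA] at h4
  rw [hsmA] at h1 ⊢
  have hρ0 : 0 ≤ ρ := SMS_rho_nonneg hfpos hgnonneg hA
  nlinarith [mul_le_mul_of_nonneg_left (show f (A ∪ u j) - f (s R ∪ u j) ≤ f A - f (s R) by linarith) hρ0]

/-- Abel summation lemma. -/
lemma SMS_abel : ∀ (q : ℕ) (t ψ : ℕ → ℝ),
    (∀ c, c ≤ q → 0 ≤ ∑ j ∈ Finset.range c, t j) →
    (∀ j, j + 1 < q → ψ (j+1) ≤ ψ j) →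
    (∀ j, j < q → 0 ≤ ψ j) →
    0 ≤ ∑ j ∈ Finset.range q, t j * ψ j := by
  intro q
  induction q with
  | zero => intro t ψ _ _ _; simp
  | succ q ih =>
    intro t ψ hT hmono hpos
    have hψq : ∀ c j, j ≤ c → c ≤ q → ψ c ≤ ψ j := by
      intro c
      induction c with
      | zero =>
        intro j hj _
        rw [Nat.le_zero.mp hj]
      | succ c ihc =>
        intro j hj hcq
        rcases Nat.lt_or_ge j (c+1) with h | h
        · exact le_trans (hmono c (by omega)) (ihc j (by omega) (by omega))
        · have : j = c + 1 := by omega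
          rw [this]
    have key : ∑ j ∈ Finset.range (q+1), t j * ψ j
        = ∑ j ∈ Finset.range q, t j * (ψ j - ψ q) + (∑ j ∈ Finset.range (q+1), t j) * ψ q := by
      have e1 : ∑ j ∈ Finset.range q, t j * (ψ j - ψ q)
          = (∑ j ∈ Finset.range q, t j * ψ j) - ∑ j ∈ Finset.range q, t j * ψ q := by
        rw [← Finset.sum_sub_distrib]
        exact Finset.sum_congr rfl (fun j _ => by ring)
      rw [e1, Finset.sum_mul, Finset.sum_range_succ, Finset.sum_range_succ]
      ring
    rw [key]
    have h1 : 0 ≤ ∑ j ∈ Finset.range q, t j * (ψ j - ψ q) := by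
      apply ih t (fun j => ψ j - ψ q)
      · intro c hc; exact hT c (by omega)
      · intro j hj
        have := hmono j (by omega)
        linarith
      · intro j hj
        have := hψq q j (by omega) le_rfl
        linarith
    have h2 : 0 ≤ (∑ j ∈ Finset.range (q+1), t j) * ψ q :=
      mul_nonneg (hT (q+1) le_rfl) (hpos q (by omega))
    linarith
end Core2
def SMS_TA {n : ℕ} (f g : Finset (Fin n) → ℝ) (s u : ℕ → Finset (Fin n)) (i j : ℕ) : ℝ :=
  g (s i ∪ u j) * (f (s (i+1) ∪ u j) - f (s i ∪ u j))

def SMS_TU {n : ℕ} (f g : Finset (Fin n) → ℝ) (s u : ℕ → Finset (Fin n)) (i j : ℕ) : ℝ :=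
  g (s i ∪ u j) * (f (s i ∪ u (j+1)) - f (s i ∪ u j))

def SMS_W {n : ℕ} (f g : Finset (Fin n) → ℝ) (s u : ℕ → Finset (Fin n)) (i j : ℕ) : ℝ :=
  (SMS_TU f g s u (i+1) j - SMS_TU f g s u i j) - (SMS_TA f g s u i (j+1) - SMS_TA f g s u i j)

lemma SMS_W_eq {n : ℕ} (f g : Finset (Fin n) → ℝ) (s u : ℕ → Finset (Fin n)) (i j : ℕ) :
    SMS_W f g s u i j
      = (g (s (i+1) ∪ u j) - g (s i ∪ u j)) * (f (s (i+1) ∪ u (j+1)) - f (s (i+1) ∪ u j))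
        - (g (s i ∪ u (j+1)) - g (s i ∪ u j)) * (f (s (i+1) ∪ u (j+1)) - f (s i ∪ u (j+1))) := by
  simp only [SMS_W, SMS_TU, SMS_TA]
  ring

lemma SMS_tele (H : ℕ → ℝ) {R m : ℕ} (h : R ≤ m) :
    ∑ i ∈ Finset.Ico R m, (H (i+1) - H i) = H m - H R := by
  rw [Finset.sum_Ico_eq_sub _ h, Finset.sum_range_sub, Finset.sum_range_sub]
  ring

section Core3
variable {n : ℕ} {f g : Finset (Fin n) → ℝ} {A : Finset (Fin n)}
  {s u : ℕ → Finset (Fin n)} {m : ℕ}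

lemma SMS_colBound (hfsub : Submodular f) (hfmono : MonotoneSet f) (hf0 : f ∅ = 0)
    (hfpos : ∀ B : Finset (Fin n), B.Nonempty → 0 < f B)
    (hgsup : Supermodular g) (hgmono : MonotoneSet g) (hg0 : g ∅ = 0)
    (hgnonneg : ∀ B : Finset (Fin n), 0 ≤ g B) (hA : A.Nonempty)
    (hAmax : ∀ C : Finset (Fin n), C.Nonempty → g C / f C ≤ g A / f A)
    (hs : ∀ i, s i ⊆ s (i+1)) (hsA : ∀ i, s i ⊆ A) (hsm : A ⊆ s m)
    (hu : ∀ j, u j ⊆ u (j+1)) (hu0 : u 0 = ∅) (hud : ∀ j, ∀ x ∈ u j, x ∉ A)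
    {R j : ℕ} (hR : R ≤ m) :
    (g A / f A * (f (s m ∪ u (j+1)) - f (s m ∪ u j)) - (g (s m ∪ u (j+1)) - g (s m ∪ u j)))
        * (f (s m ∪ u (j+1)) - f (s R ∪ u (j+1)))
      ≤ ∑ i ∈ Finset.Ico R m, SMS_W f g s u i j := by
  set ρ := g A / f A with hρdef
  set E := f (s m ∪ u (j+1)) - f (s m ∪ u j) with hE
  set Γ := g (s m ∪ u (j+1)) - g (s m ∪ u j) with hΓ
  have hρ0 : 0 ≤ ρ := SMS_rho_nonneg hfpos hgnonneg hA
  have hE0 : 0 ≤ E := by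
    have := hfmono _ _ (union_subset_union_right (hu j) : s m ∪ u j ⊆ s m ∪ u (j+1))
    simp only [hE]; linarith
  -- per-term lower bound
  have hterm : ∀ i ∈ Finset.Ico R m,
      (g (s (i+1) ∪ u j) - g (s i ∪ u j)) * E
        - Γ * (f (s (i+1) ∪ u (j+1)) - f (s i ∪ u (j+1)))
      ≤ SMS_W f g s u i j := by
    intro i hi
    simp only [Finset.mem_Ico] at hi
    have him : i ≤ m := le_of_lt hi.2
    have him1 : i + 1 ≤ m := hi.2
    rw [SMS_W_eq]
    have hα : 0 ≤ g (s (i+1) ∪ u j) - g (s i ∪ u j) := by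
      have := hgmono _ _ (union_subset_union_left (hs i) : s i ∪ u j ⊆ s (i+1) ∪ u j)
      linarith
    have he : E ≤ f (s (i+1) ∪ u (j+1)) - f (s (i+1) ∪ u j) := by
      have := SMS_Fsub hfsub hsA hud (SMS_smono hs him1) (hu j)
      simp only [hE]; linarith
    have hφ : 0 ≤ f (s (i+1) ∪ u (j+1)) - f (s i ∪ u (j+1)) := by
      have := hfmono _ _ (union_subset_union_left (hs i) : s i ∪ u (j+1) ⊆ s (i+1) ∪ u (j+1))
      linarith
    have hγ : g (s i ∪ u (j+1)) - g (s i ∪ u j) ≤ Γ := by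
      have := SMS_Gsup hgsup hsA hud (SMS_smono hs him) (hu j)
      simp only [hΓ]; linarith
    have h1 := mul_le_mul_of_nonneg_left he hα
    have h2 := mul_le_mul_of_nonneg_right hγ hφ
    nlinarith [h1, h2]
  have hsum := Finset.sum_le_sum hterm
  -- telescopes
  have ht1 : ∑ i ∈ Finset.Ico R m, (g (s (i+1) ∪ u j) - g (s i ∪ u j)) * E
      = (g (s m ∪ u j) - g (s R ∪ u j)) * E := by
    rw [← Finset.sum_mul, SMS_tele (fun i => g (s i ∪ u j)) hR]
  have ht2 : ∑ i ∈ Finset.Ico R m, Γ * (f (s (i+1) ∪ u (j+1)) - f (s i ∪ u (j+1)))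
      = Γ * (f (s m ∪ u (j+1)) - f (s R ∪ u (j+1))) := by
    rw [← Finset.mul_sum, SMS_tele (fun i => f (s i ∪ u (j+1))) hR]
  rw [Finset.sum_sub_distrib, ht1, ht2] at hsum
  -- density tail
  have hdens : ρ * (f (s m ∪ u j) - f (s R ∪ u j)) ≤ g (s m ∪ u j) - g (s R ∪ u j) :=
    SMS_densTail hgsup hfsub hf0 hg0 hfpos hgnonneg hA hAmax hs hsA hsm hu hu0 hud hR
  -- column shrink (submodularity)
  have hshrink : f (s m ∪ u (j+1)) - f (s R ∪ u (j+1)) ≤ f (s m ∪ u j) - f (s R ∪ u j) := by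
    have := SMS_Fsub hfsub hsA hud (SMS_smono hs hR) (hu j)
    linarith
  have hΨ'0 : 0 ≤ f (s m ∪ u (j+1)) - f (s R ∪ u (j+1)) := by
    have := hfmono _ _ (union_subset_union_left (SMS_smono hs hR) : s R ∪ u (j+1) ⊆ s m ∪ u (j+1))
    linarith
  -- combine
  have key : (ρ * E - Γ) * (f (s m ∪ u (j+1)) - f (s R ∪ u (j+1)))
      ≤ (g (s m ∪ u j) - g (s R ∪ u j)) * E
        - Γ * (f (s m ∪ u (j+1)) - f (s R ∪ u (j+1))) := by
    have h3 : ρ * E * (f (s m ∪ u (j+1)) - f (s R ∪ u (j+1)))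
        ≤ ρ * E * (f (s m ∪ u j) - f (s R ∪ u j)) :=
      mul_le_mul_of_nonneg_left hshrink (mul_nonneg hρ0 hE0)
    have h4 : ρ * (f (s m ∪ u j) - f (s R ∪ u j)) * E ≤ (g (s m ∪ u j) - g (s R ∪ u j)) * E :=
      mul_le_mul_of_nonneg_right hdens hE0
    nlinarith [h3, h4]
  linarith [key, hsum]
end Core3
open Finset
-- scratch: generic counter lemmas
section Counter
variable (c : ℕ → ℕ) (hc : ∀ k, c (k+1) = c k + 1 ∨ c (k+1) = c k)
include hc

lemma cmono : Monotone c := monotone_nat_of_le_succ (fun k => by rcases hc k with h | h <;> omega)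

lemma cross_exists : ∀ (N : ℕ) {M j : ℕ}, c M ≤ j → j < c N →
    ∃ k, M ≤ k ∧ k < N ∧ c k = j ∧ c (k+1) = j + 1 := by
  intro N
  induction N with
  | zero => intro M j h1 h2; exact absurd (le_trans (cmono c hc (Nat.zero_le M)) h1) (by omega)
  | succ N ih =>
    intro M j h1 h2
    by_cases hN : j < c N
    · obtain ⟨k, hk1, hk2, hk3, hk4⟩ := ih h1 hN
      exact ⟨k, hk1, by omega, hk3, hk4⟩
    · push_neg at hN
      have hstep := hc N
      have hcN : c N = j := by omega
      have hM : M ≤ N := by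
        by_contra hMN
        push_neg at hMN
        have := cmono c hc (show N + 1 ≤ M by omega)
        omega
      exact ⟨N, hM, by omega, hcN, by omega⟩

lemma cross_unique {k k' j : ℕ} (h1 : c k = j) (h2 : c (k+1) = j+1)
    (h3 : c k' = j) (h4 : c (k'+1) = j+1) : k = k' := by
  by_contra hne
  rcases Nat.lt_or_ge k k' with h | h
  · have := cmono c hc (show k + 1 ≤ k' by omega); omega
  · have hlt : k' < k := by omega
    have := cmono c hc (show k' + 1 ≤ k by omega); omega

noncomputable def kc (j : ℕ) : ℕ := sInf {k | c k = j ∧ c (k+1) = j + 1}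

lemma kc_spec {M N j : ℕ} (h1 : c M ≤ j) (h2 : j < c N) :
    M ≤ kc c j ∧ kc c j < N ∧ c (kc c j) = j ∧ c (kc c j + 1) = j + 1 := by
  obtain ⟨k, hk1, hk2, hk3, hk4⟩ := cross_exists c hc N h1 h2
  have hmem : kc c j ∈ {k | c k = j ∧ c (k+1) = j + 1} :=
    Nat.sInf_mem ⟨k, hk3, hk4⟩
  have : kc c j = k := cross_unique c hc hmem.1 hmem.2 hk3 hk4
  exact ⟨by omega, by omega, hmem.1, hmem.2⟩

lemma kc_of_step {k : ℕ} (h : c (k+1) = c k + 1) : kc c (c k) = k := by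
  have hmem : kc c (c k) ∈ {k' | c k' = c k ∧ c (k'+1) = c k + 1} :=
    Nat.sInf_mem ⟨k, rfl, h⟩
  exact cross_unique c hc hmem.1 hmem.2 rfl h

lemma counter_sum (M N : ℕ) (hMN : M ≤ N) (F : ℕ → ℝ) :
    ∑ k ∈ (Finset.Ico M N).filter (fun k => c (k+1) = c k + 1), F k
      = ∑ j ∈ Finset.Ico (c M) (c N), F (kc c j) := by
  apply Finset.sum_bij' (i := fun k _ => c k) (j := fun j _ => kc c j)
  · intro k hk
    simp only [Finset.mem_filter, Finset.mem_Ico] at hk ⊢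
    refine ⟨cmono c hc hk.1.1, ?_⟩
    have := cmono c hc (show k + 1 ≤ N from hk.1.2)
    omega
  · intro j hj
    simp only [Finset.mem_Ico] at hj
    obtain ⟨h1, h2, h3, h4⟩ := kc_spec c hc hj.1 hj.2
    simp only [Finset.mem_filter, Finset.mem_Ico]
    exact ⟨⟨h1, h2⟩, by omega⟩
  · intro k hk
    simp only [Finset.mem_filter] at hk
    exact kc_of_step c hc hk.2
  · intro j hj
    simp only [Finset.mem_Ico] at hj
    exact (kc_spec c hc hj.1 hj.2).2.2.1
  · intro k hk
    simp only [Finset.mem_filter] at hk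
    rw [kc_of_step c hc hk.2]
end Counter
lemma SMS_abelId {n : ℕ} (f g : Finset (Fin n) → ℝ) (C : ℕ → Finset (Fin n)) (N : ℕ) :
    ∑ k ∈ Finset.range N, (g (C (k+1)) - g (C k)) * f (C (k+1))
      = g (C N) * f (C N) - g (C 0) * f (C 0)
        - ∑ k ∈ Finset.range N, g (C k) * (f (C (k+1)) - f (C k)) := by
  have h : ∀ k ∈ Finset.range N, (g (C (k+1)) - g (C k)) * f (C (k+1))
      = (g (C (k+1)) * f (C (k+1)) - g (C k) * f (C k)) - g (C k) * (f (C (k+1)) - f (C k)) :=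
    fun k _ => by ring
  rw [Finset.sum_congr rfl h, Finset.sum_sub_distrib,
    Finset.sum_range_sub (fun k => g (C k) * f (C k))]

section Core4
variable {n : ℕ} {f g : Finset (Fin n) → ℝ} {A : Finset (Fin n)}
  {s u : ℕ → Finset (Fin n)} {m q N : ℕ} {a b : ℕ → ℕ}

theorem SMS_core (hfsub : Submodular f) (hfmono : MonotoneSet f) (hf0 : f ∅ = 0)
    (hfpos : ∀ B : Finset (Fin n), B.Nonempty → 0 < f B)
    (hgsup : Supermodular g) (hgmono : MonotoneSet g) (hg0 : g ∅ = 0)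
    (hgnonneg : ∀ B : Finset (Fin n), 0 ≤ g B) (hA : A.Nonempty)
    (hAmax : ∀ C : Finset (Fin n), C.Nonempty → g C / f C ≤ g A / f A)
    (hs : ∀ i, s i ⊆ s (i+1)) (hsA : ∀ i, s i ⊆ A) (hsm : A ⊆ s m) (hs0 : s 0 = ∅)
    (hu : ∀ j, u j ⊆ u (j+1)) (hu0 : u 0 = ∅) (hud : ∀ j, ∀ x ∈ u j, x ∉ A)
    (ha0 : a 0 = 0) (hb0 : b 0 = 0)
    (hab : ∀ k, (a (k+1) = a k + 1 ∧ b (k+1) = b k) ∨ (a (k+1) = a k ∧ b (k+1) = b k + 1))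
    (hm : a N = m) (hq : b N = q)
    (P Q : ℕ → Finset (Fin n)) (hP : ∀ k, P k = s (a k) ∪ u (b k))
    (hQ : ∀ k, Q k = s k ∪ u (k - m)) :
    ∑ k ∈ Finset.range N, (g (Q (k+1)) - g (Q k)) * f (Q (k+1))
      ≤ ∑ k ∈ Finset.range N, (g (P (k+1)) - g (P k)) * f (P (k+1)) := by
  -- counters
  have hca : ∀ k, a (k+1) = a k + 1 ∨ a (k+1) = a k := by
    intro k; rcases hab k with ⟨h1, _⟩ | ⟨h1, _⟩
    · exact Or.inl h1
    · exact Or.inr h1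
  have hcb : ∀ k, b (k+1) = b k + 1 ∨ b (k+1) = b k := by
    intro k; rcases hab k with ⟨_, h2⟩ | ⟨_, h2⟩
    · exact Or.inr h2
    · exact Or.inl h2
  have hamono : ∀ {i i'}, i ≤ i' → a i ≤ a i' := fun h => cmono a hca h
  have hbmono : ∀ {i i'}, i ≤ i' → b i ≤ b i' := fun h => cmono b hcb h
  have haband : ∀ k, a k + b k = k := by
    intro k
    induction k with
    | zero => omega
    | succ k ih => rcases hab k with ⟨h1, h2⟩ | ⟨h1, h2⟩ <;> omega
  have hmq : m + q = N := by have := haband N; omega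
  have hmN : m ≤ N := by omega
  have hsmA : s m = A := subset_antisymm (hsA m) hsm
  have hsConst : ∀ i, m ≤ i → s i = s m :=
    fun i hi => subset_antisymm (subset_trans (hsA i) hsm) (SMS_smono hs hi)
  have hakm : ∀ k, k ≤ N → a k ≤ m := fun k hk => hm ▸ hamono hk
  -- endpoints
  have hP0 : P 0 = ∅ := by rw [hP 0, ha0, hb0, hs0, hu0, Finset.union_empty]
  have hQ0 : Q 0 = ∅ := by
    rw [hQ 0]
    simp only [Nat.zero_sub, hs0, hu0, Finset.union_empty]
  have hPN : P N = s m ∪ u q := by rw [hP N, hm, hq]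
  have hQN : Q N = s m ∪ u q := by
    rw [hQ N, hsConst N hmN]
    congr 2
    omega
  rw [SMS_abelId f g P N, SMS_abelId f g Q N, hP0, hQ0, hPN, hQN]
  have main : ∑ k ∈ Finset.range N, g (P k) * (f (P (k+1)) - f (P k))
      ≤ ∑ k ∈ Finset.range N, g (Q k) * (f (Q (k+1)) - f (Q k)) := by
    -- split AreaP into A-steps and B-steps
    have hsplitP : ∑ k ∈ Finset.range N, g (P k) * (f (P (k+1)) - f (P k))
        = ∑ k ∈ (Finset.range N).filter (fun k => a (k+1) = a k + 1),
            SMS_TA f g s u (a k) (b k)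
          + ∑ k ∈ (Finset.range N).filter (fun k => b (k+1) = b k + 1),
            SMS_TU f g s u (a k) (b k) := by
      rw [← Finset.sum_filter_add_sum_filter_not (Finset.range N) (fun k => a (k+1) = a k + 1)]
      congr 1
      · apply Finset.sum_congr rfl
        intro k hk
        simp only [Finset.mem_filter] at hk
        have hbk : b (k+1) = b k := by rcases hab k with ⟨h1, h2⟩ | ⟨h1, h2⟩ <;> omega
        rw [hP k, hP (k+1), hk.2, hbk, SMS_TA]
      · rw [Finset.filter_congr (fun k _ => by
          constructor
          · intro h
            rcases hab k with ⟨h1, h2⟩ | ⟨h1, h2⟩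
            · exact absurd h1 h
            · exact h2
          · intro h h'
            rcases hab k with ⟨h1, h2⟩ | ⟨h1, h2⟩ <;> omega)]
        apply Finset.sum_congr rfl
        intro k hk
        simp only [Finset.mem_filter] at hk
        have hak : a (k+1) = a k := by rcases hab k with ⟨h1, h2⟩ | ⟨h1, h2⟩ <;> omega
        rw [hP k, hP (k+1), hk.2, hak, SMS_TU]
    -- split AreaQ
    have hsplitQ : ∑ k ∈ Finset.range N, g (Q k) * (f (Q (k+1)) - f (Q k))
        = ∑ i ∈ Finset.range m, SMS_TA f g s u i 0
          + ∑ j ∈ Finset.range q, SMS_TU f g s u m j := by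
      rw [← Finset.sum_range_add_sum_Ico _ hmN]
      congr 1
      · apply Finset.sum_congr rfl
        intro k hk
        simp only [Finset.mem_range] at hk
        rw [hQ k, hQ (k+1), show k - m = 0 by omega, show k + 1 - m = 0 by omega, SMS_TA]
      · rw [Finset.sum_Ico_eq_sum_range]
        rw [show N - m = q by omega]
        apply Finset.sum_congr rfl
        intro j hj
        simp only [Finset.mem_range] at hj
        rw [hQ (m+j), hQ (m+j+1), show m + j - m = j by omega, show m + j + 1 - m = j + 1 by omega,
          hsConst (m+j) (by omega), hsConst (m+j+1) (by omega), SMS_TU]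
    rw [hsplitP, hsplitQ]
    -- reindex AreaQ pieces as sums over steps
    have hR1 : ∑ i ∈ Finset.range m, SMS_TA f g s u i 0
        = ∑ k ∈ (Finset.range N).filter (fun k => a (k+1) = a k + 1),
            SMS_TA f g s u (a k) 0 := by
      rw [Finset.range_eq_Ico (a := N), counter_sum a hca 0 N (Nat.zero_le N)
        (fun k => SMS_TA f g s u (a k) 0)]
      rw [ha0, hm, ← Finset.range_eq_Ico]
      apply Finset.sum_congr rfl
      intro i hi
      simp only [Finset.mem_range] at hi
      rw [(kc_spec a hca (by omega : a 0 ≤ i) (by omega : i < a N)).2.2.1]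
    have hR2 : ∑ j ∈ Finset.range q, SMS_TU f g s u m j
        = ∑ k ∈ (Finset.range N).filter (fun k => b (k+1) = b k + 1),
            SMS_TU f g s u m (b k) := by
      rw [Finset.range_eq_Ico (a := N), counter_sum b hcb 0 N (Nat.zero_le N)
        (fun k => SMS_TU f g s u m (b k)), hb0, hq, ← Finset.range_eq_Ico]
      apply Finset.sum_congr rfl
      intro j hj
      simp only [Finset.mem_range] at hj
      rw [(kc_spec b hcb (by omega : b 0 ≤ j) (by omega : j < b N)).2.2.1]
    rw [hR1, hR2, ← sub_nonneg]
    have hdiff : (∑ k ∈ (Finset.range N).filter (fun k => a (k+1) = a k + 1),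
            SMS_TA f g s u (a k) 0
          + ∑ k ∈ (Finset.range N).filter (fun k => b (k+1) = b k + 1),
            SMS_TU f g s u m (b k))
        - (∑ k ∈ (Finset.range N).filter (fun k => a (k+1) = a k + 1),
            SMS_TA f g s u (a k) (b k)
          + ∑ k ∈ (Finset.range N).filter (fun k => b (k+1) = b k + 1),
            SMS_TU f g s u (a k) (b k))
        = ∑ k ∈ (Finset.range N).filter (fun k => a (k+1) = a k + 1),
            (SMS_TA f g s u (a k) 0 - SMS_TA f g s u (a k) (b k))
          + ∑ k ∈ (Finset.range N).filter (fun k => b (k+1) = b k + 1),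
            (SMS_TU f g s u m (b k) - SMS_TU f g s u (a k) (b k)) := by
      rw [Finset.sum_sub_distrib, Finset.sum_sub_distrib]
      ring
    rw [hdiff]
    -- telescope the A-part
    have hTeleA : ∑ k ∈ (Finset.range N).filter (fun k => a (k+1) = a k + 1),
          (SMS_TA f g s u (a k) 0 - SMS_TA f g s u (a k) (b k))
        = - ∑ k ∈ (Finset.range N).filter (fun k => a (k+1) = a k + 1),
            ∑ j ∈ Finset.range (b k), (SMS_TA f g s u (a k) (j+1) - SMS_TA f g s u (a k) j) := by
      rw [← Finset.sum_neg_distrib]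
      apply Finset.sum_congr rfl
      intro k _
      rw [Finset.sum_range_sub (fun j => SMS_TA f g s u (a k) j)]
      ring
    -- telescope the B-part
    have hTeleU : ∑ k ∈ (Finset.range N).filter (fun k => b (k+1) = b k + 1),
          (SMS_TU f g s u m (b k) - SMS_TU f g s u (a k) (b k))
        = ∑ k ∈ (Finset.range N).filter (fun k => b (k+1) = b k + 1),
            ∑ i ∈ Finset.Ico (a k) m, (SMS_TU f g s u (i+1) (b k) - SMS_TU f g s u i (b k)) := by
      apply Finset.sum_congr rfl
      intro k hk
      simp only [Finset.mem_filter, Finset.mem_range] at hk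
      rw [SMS_tele (fun i => SMS_TU f g s u i (b k)) (hakm k (le_of_lt hk.1))]
    rw [hTeleA, hTeleU]
    -- reindex the inner A-part sum by B-steps
    have hX1 : ∑ k ∈ (Finset.range N).filter (fun k => a (k+1) = a k + 1),
          ∑ j ∈ Finset.range (b k), (SMS_TA f g s u (a k) (j+1) - SMS_TA f g s u (a k) j)
        = ∑ k' ∈ (Finset.range N).filter (fun k => a (k+1) = a k + 1),
            ∑ k ∈ (Finset.range k').filter (fun k => b (k+1) = b k + 1),
              (SMS_TA f g s u (a k') (b k + 1) - SMS_TA f g s u (a k') (b k)) := by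
      apply Finset.sum_congr rfl
      intro k' _
      rw [Finset.range_eq_Ico (a := k'), counter_sum b hcb 0 k' (Nat.zero_le k')
        (fun k => SMS_TA f g s u (a k') (b k + 1) - SMS_TA f g s u (a k') (b k)),
        hb0, ← Finset.range_eq_Ico]
      apply Finset.sum_congr rfl
      intro j hj
      simp only [Finset.mem_range] at hj
      rw [(kc_spec b hcb (by omega : b 0 ≤ j) (by omega : j < b k')).2.2.1]
    rw [hX1]
    -- swap the double sum
    have hswap : ∑ k' ∈ (Finset.range N).filter (fun k => a (k+1) = a k + 1),
          ∑ k ∈ (Finset.range k').filter (fun k => b (k+1) = b k + 1),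
            (SMS_TA f g s u (a k') (b k + 1) - SMS_TA f g s u (a k') (b k))
        = ∑ k ∈ (Finset.range N).filter (fun k => b (k+1) = b k + 1),
            ∑ k' ∈ (Finset.Ico (k+1) N).filter (fun k => a (k+1) = a k + 1),
              (SMS_TA f g s u (a k') (b k + 1) - SMS_TA f g s u (a k') (b k)) := by
      have h₁ : ∀ p : ℕ × ℕ,
          p ∈ ((Finset.range N) ×ˢ (Finset.range N)).filter
              (fun p : ℕ × ℕ => b (p.1+1) = b p.1 + 1 ∧ a (p.2+1) = a p.2 + 1 ∧ p.1 < p.2)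
            ↔ p.2 ∈ (Finset.range N).filter (fun k => a (k+1) = a k + 1)
              ∧ p.1 ∈ (Finset.range p.2).filter (fun k => b (k+1) = b k + 1) := by
        intro p
        simp only [Finset.mem_filter, Finset.mem_product, Finset.mem_range]
        constructor
        · rintro ⟨⟨hp1, hp2⟩, hb1, ha1, hlt⟩
          exact ⟨⟨hp2, ha1⟩, hlt, hb1⟩
        · rintro ⟨⟨hp2, ha1⟩, hlt, hb1⟩
          exact ⟨⟨by omega, hp2⟩, hb1, ha1, hlt⟩
      have h₂ : ∀ p : ℕ × ℕ,
          p ∈ ((Finset.range N) ×ˢ (Finset.range N)).filter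
              (fun p : ℕ × ℕ => b (p.1+1) = b p.1 + 1 ∧ a (p.2+1) = a p.2 + 1 ∧ p.1 < p.2)
            ↔ p.1 ∈ (Finset.range N).filter (fun k => b (k+1) = b k + 1)
              ∧ p.2 ∈ (Finset.Ico (p.1+1) N).filter (fun k => a (k+1) = a k + 1) := by
        intro p
        simp only [Finset.mem_filter, Finset.mem_product, Finset.mem_range, Finset.mem_Ico]
        constructor
        · rintro ⟨⟨hp1, hp2⟩, hb1, ha1, hlt⟩
          exact ⟨⟨hp1, hb1⟩, ⟨by omega, hp2⟩, ha1⟩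
        · rintro ⟨⟨hp1, hb1⟩, ⟨hlt, hp2⟩, ha1⟩
          exact ⟨⟨hp1, hp2⟩, hb1, ha1, by omega⟩
      rw [← Finset.sum_finset_product_right' _
          ((Finset.range N).filter (fun k => a (k+1) = a k + 1))
          (fun k' => (Finset.range k').filter (fun k => b (k+1) = b k + 1)) h₁
          (f := fun k k' => SMS_TA f g s u (a k') (b k + 1) - SMS_TA f g s u (a k') (b k)),
        Finset.sum_finset_product' _
          ((Finset.range N).filter (fun k => b (k+1) = b k + 1))
          (fun k => (Finset.Ico (k+1) N).filter (fun k => a (k+1) = a k + 1)) h₂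
          (f := fun k k' => SMS_TA f g s u (a k') (b k + 1) - SMS_TA f g s u (a k') (b k))]
    rw [hswap]
    -- reindex the inner sums over A-steps after k by rows
    have hX3 : ∑ k ∈ (Finset.range N).filter (fun k => b (k+1) = b k + 1),
          ∑ k' ∈ (Finset.Ico (k+1) N).filter (fun k => a (k+1) = a k + 1),
            (SMS_TA f g s u (a k') (b k + 1) - SMS_TA f g s u (a k') (b k))
        = ∑ k ∈ (Finset.range N).filter (fun k => b (k+1) = b k + 1),
            ∑ i ∈ Finset.Ico (a k) m,
              (SMS_TA f g s u i (b k + 1) - SMS_TA f g s u i (b k)) := by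
      apply Finset.sum_congr rfl
      intro k hk
      simp only [Finset.mem_filter, Finset.mem_range] at hk
      have hak1 : a (k+1) = a k := by rcases hab k with ⟨h1, h2⟩ | ⟨h1, h2⟩ <;> omega
      rw [counter_sum a hca (k+1) N (by omega)
        (fun k' => SMS_TA f g s u (a k') (b k + 1) - SMS_TA f g s u (a k') (b k)),
        hak1, hm]
      apply Finset.sum_congr rfl
      intro i hi
      simp only [Finset.mem_Ico] at hi
      rw [(kc_spec a hca (by omega : a (k+1) ≤ i) (by omega : i < a N)).2.2.1]
    rw [hX3]
    -- merge into W
    have hmerge : ∑ k ∈ (Finset.range N).filter (fun k => b (k+1) = b k + 1),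
          ∑ i ∈ Finset.Ico (a k) m, (SMS_TU f g s u (i+1) (b k) - SMS_TU f g s u i (b k))
        - ∑ k ∈ (Finset.range N).filter (fun k => b (k+1) = b k + 1),
          ∑ i ∈ Finset.Ico (a k) m, (SMS_TA f g s u i (b k + 1) - SMS_TA f g s u i (b k))
        = ∑ k ∈ (Finset.range N).filter (fun k => b (k+1) = b k + 1),
            ∑ i ∈ Finset.Ico (a k) m, SMS_W f g s u i (b k) := by
      rw [← Finset.sum_sub_distrib]
      apply Finset.sum_congr rfl
      intro k _
      rw [← Finset.sum_sub_distrib]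
      rfl
    have hgoal : - ∑ k ∈ (Finset.range N).filter (fun k => b (k+1) = b k + 1),
          ∑ i ∈ Finset.Ico (a k) m, (SMS_TA f g s u i (b k + 1) - SMS_TA f g s u i (b k))
        + ∑ k ∈ (Finset.range N).filter (fun k => b (k+1) = b k + 1),
          ∑ i ∈ Finset.Ico (a k) m, (SMS_TU f g s u (i+1) (b k) - SMS_TU f g s u i (b k))
        = ∑ k ∈ (Finset.range N).filter (fun k => b (k+1) = b k + 1),
            ∑ i ∈ Finset.Ico (a k) m, SMS_W f g s u i (b k) := by
      rw [← hmerge]; ring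
    rw [hgoal]
    -- lower bound each column via colBound
    have hcol : ∀ k ∈ (Finset.range N).filter (fun k => b (k+1) = b k + 1),
        (g A / f A * (f (s m ∪ u (b k + 1)) - f (s m ∪ u (b k)))
            - (g (s m ∪ u (b k + 1)) - g (s m ∪ u (b k))))
          * (f (s m ∪ u (b k + 1)) - f (s (a k) ∪ u (b k + 1)))
        ≤ ∑ i ∈ Finset.Ico (a k) m, SMS_W f g s u i (b k) := by
      intro k hk
      simp only [Finset.mem_filter, Finset.mem_range] at hk
      exact SMS_colBound hfsub hfmono hf0 hfpos hgsup hgmono hg0 hgnonneg hA hAmax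
        hs hsA hsm hu hu0 hud (hakm k (le_of_lt hk.1))
    have hstep1 := Finset.sum_le_sum hcol
    -- reindex the lower bounds by columns
    have hX4 : ∑ k ∈ (Finset.range N).filter (fun k => b (k+1) = b k + 1),
          ((g A / f A * (f (s m ∪ u (b k + 1)) - f (s m ∪ u (b k)))
            - (g (s m ∪ u (b k + 1)) - g (s m ∪ u (b k))))
          * (f (s m ∪ u (b k + 1)) - f (s (a k) ∪ u (b k + 1))))
        = ∑ j ∈ Finset.range q,
            ((g A / f A * (f (s m ∪ u (j + 1)) - f (s m ∪ u j))
              - (g (s m ∪ u (j + 1)) - g (s m ∪ u j)))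
            * (f (s m ∪ u (j + 1)) - f (s (a (kc b j)) ∪ u (j + 1)))) := by
      rw [Finset.range_eq_Ico, counter_sum b hcb 0 N (Nat.zero_le N), hb0, hq,
        ← Finset.range_eq_Ico]
      apply Finset.sum_congr rfl
      intro j hj
      simp only [Finset.mem_range] at hj
      rw [(kc_spec b hcb (by omega : b 0 ≤ j) (by omega : j < b N)).2.2.1]
    -- Abel summation
    have habel : 0 ≤ ∑ j ∈ Finset.range q,
        ((g A / f A * (f (s m ∪ u (j + 1)) - f (s m ∪ u j))
          - (g (s m ∪ u (j + 1)) - g (s m ∪ u j)))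
        * (f (s m ∪ u (j + 1)) - f (s (a (kc b j)) ∪ u (j + 1)))) := by
      have hr_le_m : ∀ j, j < q → a (kc b j) ≤ m := by
        intro j hj
        have hspec := kc_spec b hcb (by omega : b 0 ≤ j) (by omega : j < b N)
        exact hakm _ (le_of_lt hspec.2.1)
      have hr_mono : ∀ j, j + 1 < q → a (kc b j) ≤ a (kc b (j+1)) := by
        intro j hj
        have h1 := kc_spec b hcb (by omega : b 0 ≤ j) (by omega : j < b N)
        have h2 := kc_spec b hcb (by omega : b 0 ≤ j + 1) (by omega : j + 1 < b N)
        apply hamono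
        by_contra hcon
        push_neg at hcon
        have := hbmono (le_of_lt hcon)
        omega
      refine SMS_abel q
        (fun j => g A / f A * (f (s m ∪ u (j + 1)) - f (s m ∪ u j))
          - (g (s m ∪ u (j + 1)) - g (s m ∪ u j)))
        (fun j => f (s m ∪ u (j + 1)) - f (s (a (kc b j)) ∪ u (j + 1))) ?_ ?_ ?_
      · intro c _
        have hTc : ∑ j ∈ Finset.range c,
            (g A / f A * (f (s m ∪ u (j + 1)) - f (s m ∪ u j))
              - (g (s m ∪ u (j + 1)) - g (s m ∪ u j)))
            = g A / f A * (f (s m ∪ u c) - f (s m ∪ u 0))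
              - (g (s m ∪ u c) - g (s m ∪ u 0)) := by
          rw [Finset.sum_sub_distrib, ← Finset.mul_sum,
            Finset.sum_range_sub (fun j => f (s m ∪ u j)),
            Finset.sum_range_sub (fun j => g (s m ∪ u j))]
        rw [hTc, hu0, Finset.union_empty, hsmA]
        have hdC := SMS_dens hf0 hg0 hfpos hA hAmax (s m ∪ u c)
        have hgAeq := SMS_gA_eq (g := g) hfpos hA
        rw [hsmA] at hdC
        linarith
      · intro j hj
        have h1 : f (s m ∪ u (j + 1 + 1)) - f (s (a (kc b (j+1))) ∪ u (j + 1 + 1))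
            ≤ f (s m ∪ u (j + 1)) - f (s (a (kc b (j+1))) ∪ u (j + 1)) := by
          have := SMS_Fsub hfsub hsA hud
            (SMS_smono hs (hr_le_m (j+1) (by omega))) (hu (j+1))
          linarith
        have h2 : f (s m ∪ u (j + 1)) - f (s (a (kc b (j+1))) ∪ u (j + 1))
            ≤ f (s m ∪ u (j + 1)) - f (s (a (kc b j)) ∪ u (j + 1)) := by
          have := hfmono _ _ (Finset.union_subset_union_left
            (SMS_smono hs (hr_mono j hj)) :
            s (a (kc b j)) ∪ u (j+1) ⊆ s (a (kc b (j+1))) ∪ u (j+1))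
          linarith
        exact le_trans h1 h2
      · intro j hj
        show 0 ≤ f (s m ∪ u (j + 1)) - f (s (a (kc b j)) ∪ u (j + 1))
        have := hfmono _ _ (Finset.union_subset_union_left
          (SMS_smono hs (hr_le_m j hj)) :
          s (a (kc b j)) ∪ u (j+1) ⊆ s m ∪ u (j+1))
        linarith
    rw [hX4] at hstep1
    linarith
  linarith
end Core4
-- ## Application layer
def SMS_pos {n : ℕ} (σ : Equiv.Perm (Fin n)) (k : ℕ) : Finset (Fin n) :=
  Finset.univ.filter (fun x => (σ.symm x : ℕ) < k)

def SMS_a {n : ℕ} (σ : Equiv.Perm (Fin n)) (A : Finset (Fin n)) (k : ℕ) : ℕ :=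
  ((SMS_pos σ k) ∩ A).card

def SMS_b {n : ℕ} (σ : Equiv.Perm (Fin n)) (A : Finset (Fin n)) (k : ℕ) : ℕ :=
  k - SMS_a σ A k

def SMS_s {n : ℕ} (σ : Equiv.Perm (Fin n)) (A : Finset (Fin n)) (i : ℕ) : Finset (Fin n) :=
  A.filter (fun x => SMS_a σ A (σ.symm x) < i)

def SMS_u {n : ℕ} (σ : Equiv.Perm (Fin n)) (A : Finset (Fin n)) (j : ℕ) : Finset (Fin n) :=
  (Finset.univ \ A).filter (fun x => SMS_b σ A (σ.symm x) < j)

section App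
variable {n : ℕ} {σ : Equiv.Perm (Fin n)} {A : Finset (Fin n)}

lemma SMS_pos_zero : SMS_pos σ 0 = ∅ := by
  simp [SMS_pos]

lemma SMS_pos_step {k : ℕ} (hk : k < n) :
    SMS_pos σ (k+1) = insert (σ ⟨k, hk⟩) (SMS_pos σ k) := by
  ext x
  simp only [SMS_pos, Finset.mem_filter, Finset.mem_univ, true_and, Finset.mem_insert]
  have hkk : ((⟨k, hk⟩ : Fin n) : ℕ) = k := rfl
  constructor
  · intro h
    rcases Nat.lt_or_ge (σ.symm x : ℕ) k with h' | h'
    · exact Or.inr h'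
    · have hxk : σ.symm x = ⟨k, hk⟩ := Fin.ext (by simp only [hkk]; omega)
      left
      rw [← hxk, Equiv.apply_symm_apply]
  · rintro (rfl | h)
    · rw [Equiv.symm_apply_apply, hkk]
      omega
    · omega

lemma SMS_pos_notmem {k : ℕ} (hk : k < n) : σ ⟨k, hk⟩ ∉ SMS_pos σ k := by
  simp only [SMS_pos, Finset.mem_filter, Finset.mem_univ, true_and, Equiv.symm_apply_apply]
  omega

lemma SMS_pos_flat {k : ℕ} (hk : n ≤ k) : SMS_pos σ (k+1) = SMS_pos σ k := by
  ext x
  simp only [SMS_pos, Finset.mem_filter, Finset.mem_univ, true_and]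
  have := (σ.symm x).isLt
  omega

lemma SMS_a_step_mem {k : ℕ} (hk : k < n) (hmem : σ ⟨k, hk⟩ ∈ A) :
    SMS_a σ A (k+1) = SMS_a σ A k + 1 := by
  rw [SMS_a, SMS_pos_step hk, Finset.insert_inter_of_mem hmem,
    Finset.card_insert_of_notMem (fun hc => SMS_pos_notmem hk (Finset.mem_inter.mp hc).1)]
  rfl

lemma SMS_a_step_notmem {k : ℕ} (hk : k < n) (hmem : σ ⟨k, hk⟩ ∉ A) :
    SMS_a σ A (k+1) = SMS_a σ A k := by
  rw [SMS_a, SMS_pos_step hk, Finset.insert_inter_of_notMem hmem]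
  rfl

lemma SMS_a_or : ∀ k, SMS_a σ A (k+1) = SMS_a σ A k + 1 ∨ SMS_a σ A (k+1) = SMS_a σ A k := by
  intro k
  rcases Nat.lt_or_ge k n with hk | hk
  · by_cases hmem : σ ⟨k, hk⟩ ∈ A
    · exact Or.inl (SMS_a_step_mem hk hmem)
    · exact Or.inr (SMS_a_step_notmem hk hmem)
  · right
    rw [SMS_a, SMS_pos_flat hk]
    rfl

lemma SMS_a_le : ∀ k, SMS_a σ A k ≤ k := by
  intro k
  induction k with
  | zero => simp [SMS_a, SMS_pos_zero]
  | succ k ih => rcases SMS_a_or (σ := σ) (A := A) k with h | h <;> omega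

lemma SMS_hab : ∀ k, (SMS_a σ A (k+1) = SMS_a σ A k + 1 ∧ SMS_b σ A (k+1) = SMS_b σ A k)
    ∨ (SMS_a σ A (k+1) = SMS_a σ A k ∧ SMS_b σ A (k+1) = SMS_b σ A k + 1) := by
  intro k
  have h1 := SMS_a_le (σ := σ) (A := A) k
  rcases SMS_a_or (σ := σ) (A := A) k with h | h
  · left
    refine ⟨h, ?_⟩
    simp only [SMS_b]
    omega
  · right
    refine ⟨h, ?_⟩
    simp only [SMS_b]
    omega

lemma SMS_amono : ∀ {k k' : ℕ}, k ≤ k' → SMS_a σ A k ≤ SMS_a σ A k' :=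
  fun h => cmono (SMS_a σ A) SMS_a_or h

lemma SMS_bmono : ∀ {k k' : ℕ}, k ≤ k' → SMS_b σ A k ≤ SMS_b σ A k' := by
  intro k k' h
  refine cmono (SMS_b σ A) (fun k => ?_) h
  rcases SMS_hab (σ := σ) (A := A) k with ⟨h1, h2⟩ | ⟨h1, h2⟩
  · exact Or.inr h2
  · exact Or.inl h2

lemma SMS_a_succ_self {x : Fin n} (hx : x ∈ A) :
    SMS_a σ A ((σ.symm x : ℕ) + 1) = SMS_a σ A (σ.symm x) + 1 := by
  have hp : (σ.symm x : ℕ) < n := (σ.symm x).isLt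
  have heq : σ ⟨(σ.symm x : ℕ), hp⟩ = x := by
    have : (⟨(σ.symm x : ℕ), hp⟩ : Fin n) = σ.symm x := Fin.ext rfl
    rw [this, Equiv.apply_symm_apply]
  exact SMS_a_step_mem hp (by rw [heq]; exact hx)

lemma SMS_b_succ_self {x : Fin n} (hx : x ∉ A) :
    SMS_b σ A ((σ.symm x : ℕ) + 1) = SMS_b σ A (σ.symm x) + 1 := by
  have hp : (σ.symm x : ℕ) < n := (σ.symm x).isLt
  have hσ : σ ⟨(σ.symm x : ℕ), hp⟩ = x := by
    have : (⟨(σ.symm x : ℕ), hp⟩ : Fin n) = σ.symm x := Fin.ext rfl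
    rw [this, Equiv.apply_symm_apply]
  have h1 := SMS_a_step_notmem hp (by rw [hσ]; exact hx)
  have h2 := SMS_a_le (σ := σ) (A := A) ((σ.symm x : ℕ))
  simp only [SMS_b]
  omega

lemma SMS_a_lt_iff {x : Fin n} {k : ℕ} (hx : x ∈ A) :
    SMS_a σ A (σ.symm x) < SMS_a σ A k ↔ (σ.symm x : ℕ) < k := by
  constructor
  · intro h
    by_contra hc
    push_neg at hc
    have := SMS_amono (σ := σ) (A := A) hc
    omega
  · intro h
    calc SMS_a σ A (σ.symm x) < SMS_a σ A ((σ.symm x : ℕ) + 1) := by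
          rw [SMS_a_succ_self hx]; omega
      _ ≤ SMS_a σ A k := SMS_amono (by omega)

lemma SMS_b_lt_iff {x : Fin n} {k : ℕ} (hx : x ∉ A) :
    SMS_b σ A (σ.symm x) < SMS_b σ A k ↔ (σ.symm x : ℕ) < k := by
  constructor
  · intro h
    by_contra hc
    push_neg at hc
    have := SMS_bmono (σ := σ) (A := A) hc
    omega
  · intro h
    calc SMS_b σ A (σ.symm x) < SMS_b σ A ((σ.symm x : ℕ) + 1) := by
          rw [SMS_b_succ_self hx]; omega
      _ ≤ SMS_b σ A k := SMS_bmono (by omega)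

/-- the prefix chain decomposes into the `s` and `u` chains -/
lemma SMS_chain_eq (k : ℕ) :
    SMS_s σ A (SMS_a σ A k) ∪ SMS_u σ A (SMS_b σ A k) = SMS_pos σ k := by
  ext x
  simp only [SMS_s, SMS_u, SMS_pos, Finset.mem_union, Finset.mem_filter, Finset.mem_sdiff,
    Finset.mem_univ, true_and]
  by_cases hx : x ∈ A
  · simp only [hx, true_and, not_true, false_and, or_false, and_false]
    exact SMS_a_lt_iff hx
  · simp only [hx, false_and, not_false_iff, true_and, false_or, and_false]
    exact SMS_b_lt_iff hx
end App
section App2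
set_option maxHeartbeats 1000000
variable {n : ℕ}

lemma SMS_seg_eq (σ : Equiv.Perm (Fin n)) (j : Fin n) :
    searchSegment σ j = SMS_pos σ ((σ.symm j : ℕ) + 1) := by
  ext x
  simp only [searchSegment, SMS_pos, Finset.mem_filter, Finset.mem_univ, true_and, Fin.le_def]
  omega

lemma SMS_seg_sdiff_eq (σ : Equiv.Perm (Fin n)) (j : Fin n) :
    searchSegment σ j \ {j} = SMS_pos σ (σ.symm j) := by
  ext x
  simp only [searchSegment, SMS_pos, Finset.mem_sdiff, Finset.mem_filter, Finset.mem_univ,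
    true_and, Finset.mem_singleton, Fin.le_def]
  constructor
  · rintro ⟨h1, h2⟩
    have : σ.symm x ≠ σ.symm j := fun hc => h2 (by
      have := congrArg σ hc
      rwa [Equiv.apply_symm_apply, Equiv.apply_symm_apply] at this)
    have : (σ.symm x : ℕ) ≠ (σ.symm j : ℕ) := fun hc => this (Fin.ext hc)
    omega
  · intro h
    refine ⟨by omega, fun hc => ?_⟩
    rw [hc] at h
    omega

lemma SMS_cost_eq (f g : Finset (Fin n) → ℝ) (σ : Equiv.Perm (Fin n)) :
    searchCost f g σ
      = ∑ k ∈ Finset.range n, (g (SMS_pos σ (k+1)) - g (SMS_pos σ k)) * f (SMS_pos σ (k+1)) := by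
  rw [searchCost]
  have h1 : ∀ j : Fin n, (g (searchSegment σ j) - g (searchSegment σ j \ {j}))
        * f (searchSegment σ j)
      = (fun k => (g (SMS_pos σ (k+1)) - g (SMS_pos σ k)) * f (SMS_pos σ (k+1)))
          ((σ.symm j : ℕ)) := by
    intro j
    rw [SMS_seg_sdiff_eq, SMS_seg_eq]
  rw [Finset.sum_congr rfl (fun j _ => h1 j)]
  rw [← Fin.sum_univ_eq_sum_range (fun k =>
    (g (SMS_pos σ (k+1)) - g (SMS_pos σ k)) * f (SMS_pos σ (k+1))) n]
  exact Equiv.sum_comp σ.symm (fun p : Fin n =>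
    (g (SMS_pos σ ((p : ℕ)+1)) - g (SMS_pos σ (p : ℕ))) * f (SMS_pos σ ((p : ℕ)+1)))

/-- Pulling a maximum density set to the front never increases the cost. -/
lemma SMS_pull (f g : Finset (Fin n) → ℝ)
    (hf : Submodular f) (hfmono : MonotoneSet f) (hf0 : f ∅ = 0)
    (hfpos : ∀ B : Finset (Fin n), B.Nonempty → 0 < f B)
    (hg : Supermodular g) (hgmono : MonotoneSet g) (hg0 : g ∅ = 0)
    (hgnonneg : ∀ B : Finset (Fin n), 0 ≤ g B)
    (A : Finset (Fin n)) (hA : A.Nonempty)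
    (hAmax : ∀ C : Finset (Fin n), C.Nonempty → g C / f C ≤ g A / f A)
    (σ : Equiv.Perm (Fin n)) :
    ∃ σ' : Equiv.Perm (Fin n),
      searchCost f g σ' ≤ searchCost f g σ ∧ InitialSegmentOf σ' A := by
  classical
  set a := SMS_a σ A with ha_def
  set b := SMS_b σ A with hb_def
  set s := SMS_s σ A with hs_def
  set u := SMS_u σ A with hu_def
  set m := a n with hm_def
  -- bounds for the new position function
  have ham : ∀ x : Fin n, x ∈ A → a (σ.symm x) < m := by
    intro x hx
    exact (SMS_a_lt_iff hx).mpr (σ.symm x).isLt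
  have hmn : m ≤ n := SMS_a_le n
  have hbq : ∀ x : Fin n, x ∉ A → m + b (σ.symm x) < n := by
    intro x hx
    have h1 : b (σ.symm x) < b n := (SMS_b_lt_iff hx).mpr (σ.symm x).isLt
    have h2 : b n = n - m := by rw [hb_def]; rfl
    omega
  have hbound : ∀ x : Fin n,
      (if x ∈ A then a (σ.symm x) else m + b (σ.symm x)) < n := by
    intro x
    by_cases hx : x ∈ A
    · simp only [hx, if_true]
      have := ham x hx
      omega
    · simp only [hx, if_false]
      exact hbq x hx
  set pos' : Fin n → Fin n := fun x => ⟨_, hbound x⟩ with hpos'_def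
  have hposval : ∀ x : Fin n,
      (pos' x : ℕ) = if x ∈ A then a (σ.symm x) else m + b (σ.symm x) := fun x => rfl
  -- injectivity
  have hinj : Function.Injective pos' := by
    intro x y hxy
    have hval : (if x ∈ A then a (σ.symm x) else m + b (σ.symm x))
        = (if y ∈ A then a (σ.symm y) else m + b (σ.symm y)) := by
      have := congrArg (fun z : Fin n => (z : ℕ)) hxy
      simpa [hposval] using this
    have hsymm_inj : σ.symm x = σ.symm y → x = y := by
      intro hc
      have := congrArg σ hc
      rwa [Equiv.apply_symm_apply, Equiv.apply_symm_apply] at this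
    by_cases hx : x ∈ A <;> by_cases hy : y ∈ A
    · simp only [hx, hy, if_true] at hval
      apply hsymm_inj
      by_contra hne
      have hne' : (σ.symm x : ℕ) ≠ (σ.symm y : ℕ) := fun hc => hne (Fin.ext hc)
      rcases Nat.lt_or_ge (σ.symm x : ℕ) (σ.symm y : ℕ) with hlt | hge
      · have h1 : a (σ.symm x) < a ((σ.symm x : ℕ) + 1) := by
          rw [ha_def, SMS_a_succ_self hx]; omega
        have h2 := SMS_amono (σ := σ) (A := A) (show (σ.symm x : ℕ) + 1 ≤ (σ.symm y : ℕ) by omega)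
        rw [← ha_def] at h2
        omega
      · have h1 : a (σ.symm y) < a ((σ.symm y : ℕ) + 1) := by
          rw [ha_def, SMS_a_succ_self hy]; omega
        have h2 := SMS_amono (σ := σ) (A := A) (show (σ.symm y : ℕ) + 1 ≤ (σ.symm x : ℕ) by omega)
        rw [← ha_def] at h2
        omega
    · simp only [hx, hy, if_true, if_false] at hval
      have := ham x hx
      omega
    · simp only [hx, hy, if_true, if_false] at hval
      have := ham y hy
      omega
    · simp only [hx, hy, if_false] at hval
      apply hsymm_inj
      by_contra hne
      have hne' : (σ.symm x : ℕ) ≠ (σ.symm y : ℕ) := fun hc => hne (Fin.ext hc)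
      rcases Nat.lt_or_ge (σ.symm x : ℕ) (σ.symm y : ℕ) with hlt | hge
      · have h1 : b (σ.symm x) < b ((σ.symm x : ℕ) + 1) := by
          rw [hb_def, SMS_b_succ_self hx]; omega
        have h2 := SMS_bmono (σ := σ) (A := A) (show (σ.symm x : ℕ) + 1 ≤ (σ.symm y : ℕ) by omega)
        rw [← hb_def] at h2
        omega
      · have h1 : b (σ.symm y) < b ((σ.symm y : ℕ) + 1) := by
          rw [hb_def, SMS_b_succ_self hy]; omega
        have h2 := SMS_bmono (σ := σ) (A := A) (show (σ.symm y : ℕ) + 1 ≤ (σ.symm x : ℕ) by omega)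
        rw [← hb_def] at h2
        omega
  have hbij : Function.Bijective pos' := (Finite.injective_iff_bijective).mp hinj
  set e := Equiv.ofBijective pos' hbij with he_def
  refine ⟨e.symm, ?_, ?_⟩
  · -- cost comparison via the core theorem
    have hsymm : (e.symm).symm = e := Equiv.symm_symm e
    have hchain : ∀ k : ℕ, SMS_pos e.symm k = s k ∪ u (k - m) := by
      intro k
      ext x
      simp only [SMS_pos, Finset.mem_filter, Finset.mem_univ, true_and, hsymm,
        Finset.mem_union]
      have hex : (e x : ℕ) = if x ∈ A then a (σ.symm x) else m + b (σ.symm x) := by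
        rw [he_def]
        rfl
      by_cases hx : x ∈ A
      · simp only [hx, if_true] at hex
        have hmem_s : x ∈ s k ↔ a (σ.symm x) < k := by
          simp only [hs_def, SMS_s, Finset.mem_filter, hx, true_and, ← ha_def]
        have hmem_u : x ∉ u (k - m) := by
          simp only [hu_def, SMS_u, Finset.mem_filter, Finset.mem_sdiff, Finset.mem_univ,
            true_and, hx]
          tauto
        rw [hex]
        constructor
        · intro h
          exact Or.inl (hmem_s.mpr h)
        · rintro (h | h)
          · exact hmem_s.mp h
          · exact absurd h hmem_u
      · simp only [hx, if_false] at hex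
        have hmem_s : x ∉ s k := by
          simp only [hs_def, SMS_s, Finset.mem_filter, hx, false_and]
          tauto
        have hmem_u : x ∈ u (k - m) ↔ b (σ.symm x) < k - m := by
          simp only [hu_def, SMS_u, Finset.mem_filter, Finset.mem_sdiff, Finset.mem_univ,
            true_and, hx, not_false_iff, ← hb_def]
        rw [hex]
        constructor
        · intro h
          exact Or.inr (hmem_u.mpr (by omega))
        · rintro (h | h)
          · exact absurd h hmem_s
          · have := hmem_u.mp h
            omega
    rw [SMS_cost_eq f g σ, SMS_cost_eq f g e.symm]
    have hre : ∀ k ∈ Finset.range n,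
        (g (SMS_pos e.symm (k+1)) - g (SMS_pos e.symm k)) * f (SMS_pos e.symm (k+1))
        = (g ((fun k => s k ∪ u (k - m)) (k+1)) - g ((fun k => s k ∪ u (k - m)) k))
          * f ((fun k => s k ∪ u (k - m)) (k+1)) := by
      intro k _
      rw [hchain k, hchain (k+1)]
    have hrp : ∀ k ∈ Finset.range n,
        (g (SMS_pos σ (k+1)) - g (SMS_pos σ k)) * f (SMS_pos σ (k+1))
        = (g ((fun k => s (a k) ∪ u (b k)) (k+1)) - g ((fun k => s (a k) ∪ u (b k)) k))
          * f ((fun k => s (a k) ∪ u (b k)) (k+1)) := by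
      intro k _
      simp only [ha_def, hb_def, hs_def, hu_def]
      rw [SMS_chain_eq k, SMS_chain_eq (k+1)]
    rw [Finset.sum_congr rfl hre, Finset.sum_congr rfl hrp]
    -- apply the core theorem
    have hs' : ∀ i, s i ⊆ s (i+1) := by
      intro i x hx
      simp only [hs_def, SMS_s, Finset.mem_filter] at hx ⊢
      exact ⟨hx.1, by omega⟩
    have hsA' : ∀ i, s i ⊆ A := by
      intro i
      exact Finset.filter_subset _ _
    have hsm' : A ⊆ s m := by
      intro x hx
      simp only [hs_def, SMS_s, Finset.mem_filter]
      exact ⟨hx, ham x hx⟩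
    have hs0' : s 0 = ∅ := by
      simp only [hs_def, SMS_s]
      apply Finset.filter_false_of_mem
      intro x _
      omega
    have hu' : ∀ j, u j ⊆ u (j+1) := by
      intro j x hx
      simp only [hu_def, SMS_u, Finset.mem_filter] at hx ⊢
      exact ⟨hx.1, by omega⟩
    have hu0' : u 0 = ∅ := by
      simp only [hu_def, SMS_u]
      apply Finset.filter_false_of_mem
      intro x _
      omega
    have hud' : ∀ j, ∀ x ∈ u j, x ∉ A := by
      intro j x hx
      simp only [hu_def, SMS_u, Finset.mem_filter, Finset.mem_sdiff] at hx
      exact hx.1.2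
    have ha0' : a 0 = 0 := by
      simp [ha_def, SMS_a, SMS_pos_zero]
    have hb0' : b 0 = 0 := by
      simp [hb_def, SMS_b, SMS_a, SMS_pos_zero]
    have hab' : ∀ k, (a (k+1) = a k + 1 ∧ b (k+1) = b k)
        ∨ (a (k+1) = a k ∧ b (k+1) = b k + 1) := fun k => SMS_hab k
    exact SMS_core (A := A) (s := s) (u := u) (m := m) (q := b n) (N := n) (a := a) (b := b)
      hf hfmono hf0 hfpos hg hgmono hg0 hgnonneg hA hAmax
      hs' hsA' hsm' hs0' hu' hu0' hud' ha0' hb0' hab' hm_def.symm rfl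
      (fun k => s (a k) ∪ u (b k)) (fun k => s k ∪ u (k - m))
      (fun k => rfl) (fun k => rfl)
  · -- initial segment
    intro i j hj hle
    have hsymm : (e.symm).symm = e := Equiv.symm_symm e
    rw [hsymm] at hle
    by_contra hi
    have hei : (e i : ℕ) = m + b (σ.symm i) := by
      rw [he_def]
      simp only [Equiv.ofBijective_apply, hposval, hi, if_false]
    have hej : (e j : ℕ) = a (σ.symm j) := by
      rw [he_def]
      simp only [Equiv.ofBijective_apply, hposval, hj, if_true]
    have h1 := ham j hj
    have h2 : (e i : ℕ) ≤ (e j : ℕ) := hle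
    omega
end App2

/-- Theorem 1 (second part): for any maximum density set `A` there is an optimal
search having `A` as an initial segment. -/
theorem exists_optimal_with_initial_segment {n : ℕ} (f g : Finset (Fin n) → ℝ)
    (hf : Submodular f) (hfmono : MonotoneSet f) (hf0 : f ∅ = 0)
    (hfpos : ∀ A : Finset (Fin n), A.Nonempty → 0 < f A)
    (hg : Supermodular g) (hgmono : MonotoneSet g) (hg0 : g ∅ = 0)
    (hgnonneg : ∀ A : Finset (Fin n), 0 ≤ g A)
    (A : Finset (Fin n)) (hA : A.Nonempty)
    (hAmax : ∀ C : Finset (Fin n), C.Nonempty → g C / f C ≤ g A / f A) :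
    ∃ π' : Equiv.Perm (Fin n),
      (∀ π : Equiv.Perm (Fin n), searchCost f g π' ≤ searchCost f g π) ∧
      InitialSegmentOf π' A := by
  classical
  obtain ⟨σ₀, _, hσ₀⟩ := Finset.exists_min_image (Finset.univ : Finset (Equiv.Perm (Fin n)))
    (searchCost f g) ⟨1, Finset.mem_univ 1⟩
  obtain ⟨σ', h1, h2⟩ := SMS_pull f g hf hfmono hf0 hfpos hg hgmono hg0 hgnonneg A hA hAmax σ₀
  exact ⟨σ', fun π => le_trans h1 (hσ₀ π (Finset.mem_univ π)), h2⟩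
end

section
/- Suppose S itself has maximum density, i.e., g(A)/f(A) ≤ g(S)/f(S) for all nonempty A ⊆ S. Then every search strategy π has expected cost satisfying g(S)f(S)/2 ≤ c(π) ≤ g(S)f(S). -/
open Finset

/-- Lemma 2: if the whole set has maximum density, every search costs between
`g(S)f(S)/2` and `g(S)f(S)`. -/
theorem cost_bounds_when_S_maxDensity {n : ℕ} (f g : Finset (Fin n) → ℝ)
    (hf : Submodular f) (hfmono : MonotoneSet f) (hf0 : f ∅ = 0)
    (hfpos : ∀ A : Finset (Fin n), A.Nonempty → 0 < f A)
    (hg : Supermodular g) (hgmono : MonotoneSet g) (hg0 : g ∅ = 0)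
    (hgnonneg : ∀ A : Finset (Fin n), 0 ≤ g A)
    (hSmax : ∀ A : Finset (Fin n), A.Nonempty →
      g A / f A ≤ g Finset.univ / f Finset.univ)
    (π : Equiv.Perm (Fin n)) :
    g Finset.univ * f Finset.univ / 2 ≤ searchCost f g π ∧
      searchCost f g π ≤ g Finset.univ * f Finset.univ := by
    classical
    set U : ℕ → Finset (Fin n) := fun m => Finset.univ.filter (fun i => (π.symm i : ℕ) < m) with hU
    have hU0 : U 0 = ∅ := by
      ext i; simp [hU]
    have hUn : U n = Finset.univ := by
      ext i; simp [hU, (π.symm i).isLt]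
    have hUmono : ∀ m : ℕ, U m ⊆ U (m+1) := by
      intro m i hi
      simp only [hU, Finset.mem_filter, Finset.mem_univ, true_and] at hi ⊢
      omega
    have hseg : ∀ k : Fin n, searchSegment π (π k) = U ((k:ℕ)+1) := by
      intro k; ext i
      simp only [searchSegment, hU, Finset.mem_filter, Finset.mem_univ, true_and,
        Equiv.symm_apply_apply, Fin.le_def, Nat.lt_succ_iff]
    have hseg' : ∀ k : Fin n, searchSegment π (π k) \ {π k} = U (k:ℕ) := by
      intro k; ext i
      simp only [searchSegment, hU, Finset.mem_sdiff, Finset.mem_filter, Finset.mem_univ,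
        true_and, Finset.mem_singleton, Equiv.symm_apply_apply, Fin.le_def]
      constructor
      · rintro ⟨h1, h2⟩
        have : π.symm i ≠ k := fun h => h2 (by rw [← h, Equiv.apply_symm_apply])
        have : (π.symm i : ℕ) ≠ (k : ℕ) := fun h => this (Fin.ext h)
        omega
      · intro h
        refine ⟨le_of_lt h, fun hik => ?_⟩
        rw [hik, Equiv.symm_apply_apply] at h
        omega
    have hcost : searchCost f g π
        = ∑ m ∈ Finset.range n, (g (U (m+1)) - g (U m)) * f (U (m+1)) := by
      rw [searchCost,
        ← Equiv.sum_comp π (fun j => (g (searchSegment π j) - g (searchSegment π j \ {j})) * f (searchSegment π j))]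
      rw [← Fin.sum_univ_eq_sum_range (fun m => (g (U (m+1)) - g (U m)) * f (U (m+1)))]
      refine Finset.sum_congr rfl fun k _ => ?_
      rw [hseg' k, hseg k]
    have hDelta : ∀ m : ℕ, 0 ≤ g (U (m+1)) - g (U m) := fun m =>
      sub_nonneg.2 (hgmono _ _ (hUmono m))
    have hfS : ∀ m : ℕ, f (U m) ≤ f Finset.univ := fun m =>
      hfmono _ _ (Finset.subset_univ _)
    constructor
    · -- lower bound
      rcases le_or_gt (g Finset.univ) 0 with hgS | hgS
      · have hgS0 : g Finset.univ = 0 := le_antisymm hgS (hgnonneg _)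
        have hzero : ∀ A : Finset (Fin n), g A = 0 := fun A =>
          le_antisymm (hgS0 ▸ hgmono A Finset.univ (Finset.subset_univ A)) (hgnonneg A)
        rw [hcost, hgS0]
        simp [hzero]
      · have hn : n ≠ 0 := by
          rintro rfl
          rw [Finset.univ_eq_empty (α := Fin 0)] at hgS
          rw [hg0] at hgS; exact lt_irrefl 0 hgS
        have huniv : (Finset.univ : Finset (Fin n)).Nonempty := by
          simpa [Finset.univ_nonempty_iff] using Fin.pos_iff_nonempty.mp (Nat.pos_of_ne_zero hn)
        have hfuniv : 0 < f Finset.univ := hfpos _ huniv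
        have hkey : ∀ m : ℕ, g (U m) * f Finset.univ ≤ g Finset.univ * f (U m) := by
          intro m
          rcases (U m).eq_empty_or_nonempty with h | h
          · rw [h, hg0, hf0, mul_zero, zero_mul]
          · have := hSmax (U m) h
            rw [div_le_div_iff₀ (hfpos _ h) hfuniv] at this
            exact this
        have hmain : g Finset.univ * g Finset.univ * f Finset.univ ≤
            2 * g Finset.univ * searchCost f g π := by
          rw [hcost, Finset.mul_sum]
          have htele : ∑ m ∈ Finset.range n,
              (g (U (m+1)) * g (U (m+1)) * f Finset.univ - g (U m) * g (U m) * f Finset.univ)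
              = g Finset.univ * g Finset.univ * f Finset.univ := by
            rw [Finset.sum_range_sub (fun m => g (U m) * g (U m) * f Finset.univ)]
            rw [hUn, hU0, hg0]; ring
          rw [← htele]
          refine Finset.sum_le_sum fun m _ => ?_
          have h1 := hkey (m+1)
          have h2 := hDelta m
          have h3 := hgnonneg (U m)
          have h4 := hgnonneg (U (m+1))
          nlinarith [mul_nonneg h2 (sub_nonneg.2 h1), sq_nonneg (g (U (m+1)) - g (U m)),
            mul_nonneg (sq_nonneg (g (U (m+1)) - g (U m))) hfuniv.le]
        nlinarith [hmain, hgS]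
    · -- upper bound
      rw [hcost]
      calc ∑ m ∈ Finset.range n, (g (U (m+1)) - g (U m)) * f (U (m+1))
          ≤ ∑ m ∈ Finset.range n, (g (U (m+1)) - g (U m)) * f Finset.univ :=
            Finset.sum_le_sum fun m _ => mul_le_mul_of_nonneg_left (hfS (m+1)) (hDelta m)
        _ = (∑ m ∈ Finset.range n, (g (U (m+1)) - g (U m))) * f Finset.univ :=
            (Finset.sum_mul _ _ _).symm
        _ = g Finset.univ * f Finset.univ := by
            rw [Finset.sum_range_sub (fun m => g (U m)), hUn, hU0, hg0, sub_zero]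
end

section
/- For any permutation π of S with reverse permutation π' (so π'(i) = π(n+1−i)), the search cost satisfies c_{f,g}(π) = c_{g^#, f^#}(π'), where c_{f,g}(π) = ∑_j (g(S_j^π) − g(S_j^π − j)) f(S_j^π). Consequently min_π c_{f,g}(π) = min_π c_{g^#,f^#}(π). -/
open Finset

def segN {n : ℕ} (σ : Equiv.Perm (Fin n)) (m : ℕ) : Finset (Fin n) :=
  Finset.univ.filter fun i => ((σ.symm i : ℕ) < m)

lemma segN_zero {n : ℕ} (σ : Equiv.Perm (Fin n)) : segN σ 0 = ∅ := by
  simp [segN]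

lemma segN_top {n : ℕ} (σ : Equiv.Perm (Fin n)) : segN σ n = Finset.univ := by
  ext i
  simp only [segN, Finset.mem_filter, Finset.mem_univ, true_and, iff_true]
  exact (σ.symm i).isLt

lemma revPerm_symm_apply {n : ℕ} (σ : Equiv.Perm (Fin n)) (i : Fin n) :
    (reversePerm σ).symm i = (σ.symm i).rev := rfl

lemma seg_eq {n : ℕ} (σ : Equiv.Perm (Fin n)) (k : Fin n) :
    searchSegment σ (σ k) = segN σ (k + 1) := by
  ext i
  simp only [searchSegment, segN, Finset.mem_filter, Finset.mem_univ, true_and,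
    Equiv.symm_apply_apply, Fin.le_def, Nat.lt_succ_iff]

lemma seg_sdiff_eq {n : ℕ} (σ : Equiv.Perm (Fin n)) (k : Fin n) :
    searchSegment σ (σ k) \ {σ k} = segN σ k := by
  ext i
  simp only [searchSegment, segN, Finset.mem_sdiff, Finset.mem_filter,
    Finset.mem_univ, true_and, Finset.mem_singleton, Equiv.symm_apply_apply]
  constructor
  · rintro ⟨h1, h2⟩
    have : σ.symm i ≠ k := fun h => h2 (by rw [← h, Equiv.apply_symm_apply])
    exact lt_of_le_of_ne (Fin.le_def.mp h1) (fun h => this (Fin.ext h))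
  · intro h
    refine ⟨Fin.le_def.mpr (le_of_lt h), fun hi => ?_⟩
    subst hi
    simp at h

lemma rev_seg_eq {n : ℕ} (σ : Equiv.Perm (Fin n)) (k : Fin n) :
    searchSegment (reversePerm σ) (σ k) = (segN σ k)ᶜ := by
  ext i
  simp only [searchSegment, segN, Finset.mem_filter, Finset.mem_univ, true_and,
    Finset.mem_compl, revPerm_symm_apply, Equiv.symm_apply_apply, Fin.rev_le_rev, not_lt]
  exact Fin.le_def

lemma rev_seg_sdiff_eq {n : ℕ} (σ : Equiv.Perm (Fin n)) (k : Fin n) :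
    searchSegment (reversePerm σ) (σ k) \ {σ k} = (segN σ (k + 1))ᶜ := by
  ext i
  simp only [searchSegment, segN, Finset.mem_sdiff, Finset.mem_filter, Finset.mem_univ,
    true_and, Finset.mem_compl, Finset.mem_singleton, revPerm_symm_apply,
    Equiv.symm_apply_apply, Fin.rev_le_rev, not_lt]
  constructor
  · rintro ⟨h1, h2⟩
    have hne : σ.symm i ≠ k := fun h => h2 (by rw [← h, Equiv.apply_symm_apply])
    have hlt : k < σ.symm i := lt_of_le_of_ne h1 (Ne.symm hne)
    have := Fin.lt_def.mp hlt
    omega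
  · intro h
    refine ⟨Fin.le_def.mpr (by omega), fun hi => ?_⟩
    subst hi
    simp only [Equiv.symm_apply_apply] at h
    omega

lemma abel_key (a b : ℕ → ℝ) (ha : a 0 = 0) (hb : b 0 = 0) (n : ℕ) :
    ∑ k ∈ Finset.range n, (b (k + 1) - b k) * a (k + 1) =
      ∑ k ∈ Finset.range n, (a (k + 1) - a k) * (b n - b k) := by
  have h1 : ∑ k ∈ Finset.range n, (b (k + 1) - b k) * a (k + 1) =
      (∑ k ∈ Finset.range n, (b (k + 1) * a (k + 1) - b k * a k))
        - ∑ k ∈ Finset.range n, (a (k + 1) - a k) * b k := by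
    rw [← Finset.sum_sub_distrib]
    exact Finset.sum_congr rfl fun k _ => by ring
  have h2 : ∑ k ∈ Finset.range n, (a (k + 1) - a k) * (b n - b k) =
      (∑ k ∈ Finset.range n, (a (k + 1) - a k)) * b n
        - ∑ k ∈ Finset.range n, (a (k + 1) - a k) * b k := by
    rw [Finset.sum_mul, ← Finset.sum_sub_distrib]
    exact Finset.sum_congr rfl fun k _ => by ring
  rw [h1, h2, Finset.sum_range_sub (fun k => b k * a k), Finset.sum_range_sub a, ha, hb]
  ring

lemma searchCost_eq_range {n : ℕ} (f g : Finset (Fin n) → ℝ) (σ : Equiv.Perm (Fin n)) :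
    searchCost f g σ = ∑ k ∈ Finset.range n,
      (g (segN σ (k + 1)) - g (segN σ k)) * f (segN σ (k + 1)) := by
  rw [searchCost, ← Equiv.sum_comp σ
    (fun j => (g (searchSegment σ j) - g (searchSegment σ j \ {j})) * f (searchSegment σ j)),
    ← Fin.sum_univ_eq_sum_range
      (fun m => (g (segN σ (m + 1)) - g (segN σ m)) * f (segN σ (m + 1)))]
  exact Finset.sum_congr rfl fun k _ => by rw [seg_sdiff_eq, seg_eq]

lemma searchCost_rev_eq_range {n : ℕ} (f g : Finset (Fin n) → ℝ) (σ : Equiv.Perm (Fin n)) :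
    searchCost (dual g) (dual f) (reversePerm σ) = ∑ k ∈ Finset.range n,
      (f (segN σ (k + 1)) - f (segN σ k)) * (g Finset.univ - g (segN σ k)) := by
  rw [searchCost, ← Equiv.sum_comp σ (fun j =>
      (dual f (searchSegment (reversePerm σ) j)
        - dual f (searchSegment (reversePerm σ) j \ {j}))
        * dual g (searchSegment (reversePerm σ) j)),
    ← Fin.sum_univ_eq_sum_range
      (fun m => (f (segN σ (m + 1)) - f (segN σ m)) * (g Finset.univ - g (segN σ m)))]
  refine Finset.sum_congr rfl fun k _ => ?_
  rw [rev_seg_sdiff_eq, rev_seg_eq]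
  simp only [dual, compl_compl]
  ring

lemma searchCost_dual {n : ℕ} (f g : Finset (Fin n) → ℝ)
    (hf0 : f ∅ = 0) (hg0 : g ∅ = 0) (σ : Equiv.Perm (Fin n)) :
    searchCost f g σ = searchCost (dual g) (dual f) (reversePerm σ) := by
  rw [searchCost_eq_range, searchCost_rev_eq_range, ← segN_top σ,
    abel_key (fun m => f (segN σ m)) (fun m => g (segN σ m))
      (by simpa [segN_zero] using hf0) (by simpa [segN_zero] using hg0)]

/-- Duality of the search cost: `c_{f,g}(π) = c_{g^#,f^#}(π')` for the reverse
permutation `π'`, hence the minima agree. -/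
theorem searchCost_duality {n : ℕ} (f g : Finset (Fin n) → ℝ)
    (hf0 : f ∅ = 0) (hg0 : g ∅ = 0) (π : Equiv.Perm (Fin n)) :
    searchCost f g π = searchCost (dual g) (dual f) (reversePerm π) ∧
      (⨅ τ : Equiv.Perm (Fin n), searchCost f g τ) =
        ⨅ τ : Equiv.Perm (Fin n), searchCost (dual g) (dual f) τ := by
  constructor
  · exact searchCost_dual f g hf0 hg0 π
  · have hrange : Set.range (searchCost f g) =
        Set.range (searchCost (dual g) (dual f)) := by
      ext x
      constructor
      · rintro ⟨τ, rfl⟩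
        exact ⟨reversePerm τ, (searchCost_dual f g hf0 hg0 τ).symm⟩
      · rintro ⟨τ, rfl⟩
        refine ⟨Fin.revPerm.trans τ, ?_⟩
        have h := searchCost_dual f g hf0 hg0 (Fin.revPerm.trans τ)
        have h2 : reversePerm (Fin.revPerm.trans τ) = τ := by
          ext i
          simp [reversePerm]
        rwa [h2] at h
    rw [iInf, iInf, hrange]
end

section
/- Let f be a non-decreasing submodular function with f(∅)=0 and f(s)>0 for all s, and total curvature κ_f = 1 − min_{s∈S} (f(S)−f(S−s))/f(s). Then for every nonempty A ⊆ S: f(S) − f(S\A) ≥ (1−κ_f) · f(A). -/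
open Finset

theorem curvature_bound {n : ℕ} [NeZero n] (f : Finset (Fin n) → ℝ)
    (hf : Submodular f) (hfmono : MonotoneSet f) (hf0 : f ∅ = 0)
    (hfpos : ∀ s : Fin n, 0 < f {s})
    (κ : ℝ)
    (hκ : κ = 1 - Finset.univ.inf' Finset.univ_nonempty
      (fun s : Fin n => (f Finset.univ - f (Finset.univ \ {s})) / f {s}))
    (A : Finset (Fin n)) (hA : A.Nonempty) :
    (1 - κ) * f A ≤ f Finset.univ - f (Finset.univ \ A) := by

  have hc0 : (0:ℝ) ≤ 1 - κ := by
    rw [hκ]; simp only [sub_sub_cancel]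
    apply Finset.le_inf'
    intro s _
    apply div_nonneg
    · linarith [hfmono (Finset.univ \ {s}) Finset.univ Finset.sdiff_subset]
    · exact (hfpos s).le
  have hkey : ∀ s : Fin n, (1 - κ) * f {s} ≤ f Finset.univ - f (Finset.univ \ {s}) := by
    intro s
    have h1 : (1 - κ) ≤ (f Finset.univ - f (Finset.univ \ {s})) / f {s} := by
      rw [hκ]; simp only [sub_sub_cancel]
      exact Finset.inf'_le _ (Finset.mem_univ s)
    exact (le_div_iff₀ (hfpos s)).mp h1
  have hsub : ∀ B : Finset (Fin n), f B ≤ ∑ s ∈ B, f {s} := by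
    intro B
    induction B using Finset.induction_on with
    | empty => simp [hf0]
    | @insert a B' ha ih =>
      have h := hf {a} B'
      have hins : insert a B' = {a} ∪ B' := by
        ext x; simp [Finset.mem_insert]
      have hint : ({a} : Finset (Fin n)) ∩ B' = ∅ := by
        ext x; simp; rintro rfl; exact ha
      rw [Finset.sum_insert ha, hins]
      rw [hint, hf0] at h
      linarith
  have hsum : ∀ B : Finset (Fin n), ∑ s ∈ B, (f Finset.univ - f (Finset.univ \ {s}))
      ≤ f Finset.univ - f (Finset.univ \ B) := by
    intro B
    induction B using Finset.induction_on with
    | empty => simp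
    | @insert a B' ha ih =>
      have h := hf (Finset.univ \ {a}) (Finset.univ \ B')
      have hun : (Finset.univ \ {a}) ∪ (Finset.univ \ B') = (Finset.univ : Finset (Fin n)) := by
        ext x; simp only [Finset.mem_union, Finset.mem_sdiff, Finset.mem_univ, true_and,
          Finset.mem_singleton, iff_true]
        by_cases hx : x = a
        · subst hx; exact Or.inr ha
        · exact Or.inl hx
      have hin : (Finset.univ \ {a}) ∩ (Finset.univ \ B') = Finset.univ \ insert a B' := by
        ext x; simp [Finset.mem_insert]
      rw [hun, hin] at h
      rw [Finset.sum_insert ha]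
      linarith
  calc (1 - κ) * f A ≤ (1 - κ) * ∑ s ∈ A, f {s} :=
        mul_le_mul_of_nonneg_left (hsub A) hc0
    _ = ∑ s ∈ A, (1 - κ) * f {s} := Finset.mul_sum _ _ _
    _ ≤ ∑ s ∈ A, (f Finset.univ - f (Finset.univ \ {s})) :=
        Finset.sum_le_sum (fun s _ => hkey s)
    _ ≤ f Finset.univ - f (Finset.univ \ A) := hsum A
end

section
/- Suppose S has maximum density, f has total curvature κ_f, and the dual g^# has total curvature κ_{g^#}. Then for every nonempty A ⊆ S, the density satisfies (1−κ_f)(1−κ_{g^#}) ρ* ≤ ρ(A) ≤ ρ*, where ρ* = g(S)/f(S). -/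
open Finset

lemma key_curvature {n : ℕ} (h : Finset (Fin n) → ℝ) (hsub : Submodular h) (h0 : h ∅ = 0)
    (c : ℝ) (hc : 0 ≤ c)
    (hstep : ∀ s : Fin n, c * h {s} ≤ h Finset.univ - h (Finset.univ \ {s})) :
    ∀ A : Finset (Fin n), c * h A ≤ h Finset.univ - h Aᶜ := by
  intro A
  induction A using Finset.induction_on with
  | empty => simp [h0]
  | @insert a s hs ih =>
    have h1 : h (insert a s) + h (∅ : Finset (Fin n)) ≤ h {a} + h s := by
      have := hsub {a} s
      rwa [Finset.singleton_inter_of_notMem hs, ← Finset.insert_eq] at this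
    have hmem : a ∈ sᶜ := Finset.mem_compl.mpr hs
    have hu : sᶜ ∪ (Finset.univ \ {a}) = Finset.univ := by
      ext x
      by_cases hx : x = a <;> simp [hx, hs]
    have hi : sᶜ ∩ (Finset.univ \ {a}) = sᶜ \ {a} := by
      ext x; simp [and_comm]
    have h2 : h Finset.univ + h (sᶜ \ {a}) ≤ h sᶜ + h (Finset.univ \ {a}) := by
      have := hsub sᶜ (Finset.univ \ {a})
      rwa [hu, hi] at this
    have hcompl : (insert a s)ᶜ = sᶜ \ {a} := by
      ext x
      by_cases hx : x = a <;> simp [hx]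
    have h3 : c * h (insert a s) ≤ c * h {a} + c * h s := by
      have := mul_le_mul_of_nonneg_left (by linarith [h1, h0.le, h0.ge] : h (insert a s) ≤ h {a} + h s) hc
      linarith [this]
    have h4 := hstep a
    rw [hcompl]
    linarith

/-- Lemma 4: density bounds in terms of the total curvatures of `f` and `g^#`,
when the whole ground set has maximum density. -/
theorem density_curvature_bounds {n : ℕ} [NeZero n] (f g : Finset (Fin n) → ℝ)
    (hf : Submodular f) (hfmono : MonotoneSet f) (hf0 : f ∅ = 0)
    (hfpos : ∀ A : Finset (Fin n), A.Nonempty → 0 < f A)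
    (hg : Supermodular g) (hgmono : MonotoneSet g) (hg0 : g ∅ = 0)
    (hgnonneg : ∀ A : Finset (Fin n), 0 ≤ g A)
    (hgprop : ∀ A : Finset (Fin n), A ≠ Finset.univ → g A < g Finset.univ)
    (hSmax : ∀ A : Finset (Fin n), A.Nonempty →
      g A / f A ≤ g Finset.univ / f Finset.univ)
    (κf κg : ℝ)
    (hκf : κf = 1 - Finset.univ.inf' Finset.univ_nonempty
      (fun s : Fin n => (f Finset.univ - f (Finset.univ \ {s})) / f {s}))
    (hκg : κg = 1 - Finset.univ.inf' Finset.univ_nonempty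
      (fun s : Fin n =>
        (dual g Finset.univ - dual g (Finset.univ \ {s})) / dual g {s}))
    (A : Finset (Fin n)) (hA : A.Nonempty) :
    (1 - κf) * (1 - κg) * (g Finset.univ / f Finset.univ) ≤ g A / f A ∧
      g A / f A ≤ g Finset.univ / f Finset.univ := by

  classical
  have hfS : 0 < f Finset.univ := hfpos _ Finset.univ_nonempty
  set ρ : ℝ := g Finset.univ / f Finset.univ with hρdef
  have hρ0 : 0 ≤ ρ := div_nonneg (hgnonneg _) hfS.le
  have hgSe : g Finset.univ = ρ * f Finset.univ := by
    rw [hρdef, div_mul_cancel₀ _ hfS.ne']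
  -- positivity of singletons
  have hfs : ∀ s : Fin n, 0 < f {s} := fun s => hfpos _ ⟨s, Finset.mem_singleton_self s⟩
  have hds : ∀ s : Fin n, 0 < dual g {s} := by
    intro s
    have hne : ({s}ᶜ : Finset (Fin n)) ≠ Finset.univ := by
      intro hcon
      have : s ∈ ({s}ᶜ : Finset (Fin n)) := hcon ▸ Finset.mem_univ s
      simp at this
    exact sub_pos.mpr (hgprop _ hne)
  -- dual g is submodular with dual g ∅ = 0
  have hdsub : Submodular (dual g) := by
    intro X Y
    have := hg Xᶜ Yᶜ
    simp only [dual, Finset.compl_union, Finset.compl_inter]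
    linarith
  have hd0 : dual g (∅ : Finset (Fin n)) = 0 := by simp [dual]
  have hdmono : ∀ X Y : Finset (Fin n), X ⊆ Y → dual g X ≤ dual g Y := by
    intro X Y hXY
    have : Yᶜ ⊆ Xᶜ := Finset.compl_subset_compl.mpr hXY
    have := hgmono _ _ this
    simp only [dual]
    linarith
  -- nonnegativity of 1 - κf, 1 - κg
  have hκf' : 1 - κf = Finset.univ.inf' Finset.univ_nonempty
      (fun s : Fin n => (f Finset.univ - f (Finset.univ \ {s})) / f {s}) := by
    rw [hκf]; ring
  have hκg' : 1 - κg = Finset.univ.inf' Finset.univ_nonempty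
      (fun s : Fin n =>
        (dual g Finset.univ - dual g (Finset.univ \ {s})) / dual g {s}) := by
    rw [hκg]; ring
  have hcf : 0 ≤ 1 - κf := by
    rw [hκf']
    apply Finset.le_inf'
    intro s _
    exact div_nonneg (sub_nonneg.mpr (hfmono _ _ Finset.sdiff_subset)) (hfs s).le
  have hcg : 0 ≤ 1 - κg := by
    rw [hκg']
    apply Finset.le_inf'
    intro s _
    exact div_nonneg (sub_nonneg.mpr (hdmono _ _ (Finset.subset_univ _))) (hds s).le
  -- curvature step inequalities
  have hstepf : ∀ s : Fin n, (1 - κf) * f {s} ≤ f Finset.univ - f (Finset.univ \ {s}) := by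
    intro s
    have h1 : 1 - κf ≤ (f Finset.univ - f (Finset.univ \ {s})) / f {s} := by
      rw [hκf']
      exact Finset.inf'_le _ (Finset.mem_univ s)
    exact (le_div_iff₀ (hfs s)).mp h1
  have hstepg : ∀ s : Fin n,
      (1 - κg) * dual g {s} ≤ dual g Finset.univ - dual g (Finset.univ \ {s}) := by
    intro s
    have h1 : 1 - κg ≤ (dual g Finset.univ - dual g (Finset.univ \ {s})) / dual g {s} := by
      rw [hκg']
      exact Finset.inf'_le _ (Finset.mem_univ s)
    exact (le_div_iff₀ (hds s)).mp h1
  have Kf := key_curvature f hf hf0 _ hcf hstepf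
  have Kg := key_curvature (dual g) hdsub hd0 _ hcg hstepg
  -- (1 - κg) * dual g A ≤ g A
  have hgA : (1 - κg) * dual g A ≤ g A := by
    have h1 := Kg A
    have e : dual g Finset.univ - dual g Aᶜ = g A := by
      simp [dual, hg0]
    linarith
  -- g Aᶜ ≤ ρ * f Aᶜ
  have hcompA : g Aᶜ ≤ ρ * f Aᶜ := by
    rcases (Aᶜ : Finset (Fin n)).eq_empty_or_nonempty with he | hne
    · rw [he]; simp [hf0, hg0]
    · have := hSmax Aᶜ hne
      exact (div_le_iff₀ (hfpos _ hne)).mp this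
  -- ρ * ((1 - κf) * f A) ≤ dual g A
  have hdA : ρ * ((1 - κf) * f A) ≤ dual g A := by
    have h1 := mul_le_mul_of_nonneg_left (Kf A) hρ0
    have : dual g A = g Finset.univ - g Aᶜ := rfl
    nlinarith [hcompA, hgSe]
  have final : (1 - κf) * (1 - κg) * ρ * f A ≤ g A := by
    have h2 := mul_le_mul_of_nonneg_left hdA hcg
    nlinarith [hgA]
  constructor
  · exact (le_div_iff₀ (hfpos A hA)).mpr (by linarith)
  · exact hSmax A hA
end

section
/- For any permutation π of S with reverse π', the quantity ε_{f,g}(π) = ∑_j (f(S_j^π) − f(S_j^π − j))(g(S_j^π) − g(S_j^π − j)) satisfies ε_{f,g}(π) = ε_{f^#, g^#}(π'). -/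
open Finset

def eps {n : ℕ} (f g : Finset (Fin n) → ℝ) (σ : Equiv.Perm (Fin n)) : ℝ :=
  ∑ j, (f (searchSegment σ j) - f (searchSegment σ j \ {j})) *
    (g (searchSegment σ j) - g (searchSegment σ j \ {j}))

lemma compl_seg {n : ℕ} (π : Equiv.Perm (Fin n)) (j : Fin n) :
    (searchSegment (reversePerm π) j)ᶜ = searchSegment π j \ {j} := by
  ext i
  simp only [searchSegment, reversePerm, Finset.mem_compl, Finset.mem_filter,
    Finset.mem_univ, true_and, Finset.mem_sdiff, Finset.mem_singleton,
    Equiv.symm_trans_apply, Fin.revPerm_symm, Fin.revPerm_apply, Fin.rev_le_rev,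
    not_le]
  constructor
  · intro h
    exact ⟨le_of_lt h, fun hij => absurd (hij ▸ h) (lt_irrefl _)⟩
  · intro ⟨h1, h2⟩
    exact lt_of_le_of_ne h1 (fun he => h2 (π.symm.injective he ▸ rfl))

lemma compl_seg' {n : ℕ} (π : Equiv.Perm (Fin n)) (j : Fin n) :
    (searchSegment (reversePerm π) j \ {j})ᶜ = searchSegment π j := by
  ext i
  simp only [searchSegment, reversePerm, Finset.mem_compl, Finset.mem_filter,
    Finset.mem_univ, true_and, Finset.mem_sdiff, Finset.mem_singleton,
    Equiv.symm_trans_apply, Fin.revPerm_symm, Fin.revPerm_apply, Fin.rev_le_rev,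
    not_and, not_not]
  constructor
  · intro h
    by_cases hij : i = j
    · exact hij ▸ le_refl _
    · rcases le_or_gt (π.symm i) (π.symm j) with h' | h'
      · exact h'
      · exact absurd (h (le_of_lt h')) hij
  · intro h hji
    exact π.symm.injective (le_antisymm hji h) ▸ rfl

theorem eps_duality {n : ℕ} (f g : Finset (Fin n) → ℝ)
    (hf0 : f ∅ = 0) (hg0 : g ∅ = 0) (π : Equiv.Perm (Fin n)) :
    eps f g π = eps (dual f) (dual g) (reversePerm π) := by
  unfold eps
  apply Finset.sum_congr rfl
  intro j _
  simp only [dual, compl_seg, compl_seg']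
  ring
end

section
/- Let f be submodular with f(∅)=0, f(s)>0 for all s, and total curvature κ_f, and let g be supermodular with g(∅)=0. Let π_1 be a permutation ordering elements in non-increasing order of f({j}). Then (1−κ_f)·ε(π_1) ≤ min over all permutations π of ε(π), where ε(π) = ∑_j (f(S_j^π) − f(S_j^π − j))(g(S_j^π) − g(S_j^π − j)). -/
open Finset

/-! ### Auxiliary definitions and lemmas -/

/-- The marginal increment of `g` at `j` under search `σ`. -/
def deltaG {n : ℕ} (g : Finset (Fin n) → ℝ) (σ : Equiv.Perm (Fin n)) (j : Fin n) : ℝ :=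
  g (searchSegment σ j) - g (searchSegment σ j \ {j})

lemma mem_searchSegment_self {n : ℕ} (σ : Equiv.Perm (Fin n)) (j : Fin n) :
    j ∈ searchSegment σ j := by simp [searchSegment]

lemma insert_searchSegment {n : ℕ} (σ : Equiv.Perm (Fin n)) (j : Fin n) :
    insert j (searchSegment σ j \ {j}) = searchSegment σ j := by
  rw [Finset.sdiff_singleton_eq_erase, Finset.insert_erase (mem_searchSegment_self σ j)]

lemma supermodular_insert_mono {n : ℕ} {g : Finset (Fin n) → ℝ} (hg : Supermodular g)
    {A B : Finset (Fin n)} (hAB : A ⊆ B) {j : Fin n} (hj : j ∉ B) :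
    g (insert j A) - g A ≤ g (insert j B) - g B := by
  have h := hg (insert j A) B
  have hu : insert j A ∪ B = insert j B := by
    rw [Finset.insert_union, Finset.union_eq_right.mpr hAB]
  have hi : insert j A ∩ B = A := by
    ext x
    simp only [Finset.mem_inter, Finset.mem_insert]
    constructor
    · rintro ⟨(rfl | hx), hxB⟩
      · exact absurd hxB hj
      · exact hx
    · exact fun hx => ⟨Or.inr hx, hAB hx⟩
  rw [hu, hi] at h
  linarith

lemma submodular_insert_anti {n : ℕ} {f : Finset (Fin n) → ℝ} (hf : Submodular f)
    {A B : Finset (Fin n)} (hAB : A ⊆ B) {j : Fin n} (hj : j ∉ B) :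
    f (insert j B) - f B ≤ f (insert j A) - f A := by
  have h := hf (insert j A) B
  have hu : insert j A ∪ B = insert j B := by
    rw [Finset.insert_union, Finset.union_eq_right.mpr hAB]
  have hi : insert j A ∩ B = A := by
    ext x
    simp only [Finset.mem_inter, Finset.mem_insert]
    constructor
    · rintro ⟨(rfl | hx), hxB⟩
      · exact absurd hxB hj
      · exact hx
    · exact fun hx => ⟨Or.inr hx, hAB hx⟩
  rw [hu, hi] at h
  linarith

lemma delta_le_single {n : ℕ} {f : Finset (Fin n) → ℝ} (hf : Submodular f) (hf0 : f ∅ = 0)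
    (σ : Equiv.Perm (Fin n)) (j : Fin n) :
    f (searchSegment σ j) - f (searchSegment σ j \ {j}) ≤ f {j} := by
  have hj : j ∉ searchSegment σ j \ {j} := by simp
  have h := submodular_insert_anti hf (Finset.empty_subset (searchSegment σ j \ {j})) hj
  rw [insert_searchSegment] at h
  simpa [hf0] using h

lemma delta_ge_curv {n : ℕ} {f : Finset (Fin n) → ℝ} (hf : Submodular f)
    (σ : Equiv.Perm (Fin n)) (j : Fin n) :
    f Finset.univ - f (Finset.univ \ {j}) ≤
      f (searchSegment σ j) - f (searchSegment σ j \ {j}) := by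
  have hj : j ∉ Finset.univ \ {j} := by simp
  have hAB : searchSegment σ j \ {j} ⊆ Finset.univ \ {j} := by
    intro x hx
    simp only [Finset.mem_sdiff, Finset.mem_singleton] at hx ⊢
    exact ⟨Finset.mem_univ x, hx.2⟩
  have h := submodular_insert_anti hf hAB hj
  rw [insert_searchSegment] at h
  have huniv : insert j (Finset.univ \ {j}) = (Finset.univ : Finset (Fin n)) := by
    rw [Finset.sdiff_singleton_eq_erase, Finset.insert_erase (Finset.mem_univ j)]
  rwa [huniv] at h

/-- Lower bound: for any set `T`, the sum of increments over `T` is at least `g T`. -/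
lemma sum_deltaG_ge {n : ℕ} {g : Finset (Fin n) → ℝ} (hg : Supermodular g) (hg0 : g ∅ = 0)
    (π : Equiv.Perm (Fin n)) (T : Finset (Fin n)) :
    g T ≤ ∑ j ∈ T, deltaG g π j := by
  have main : ∀ (N : ℕ) (T' : Finset (Fin n)), T'.card ≤ N → g T' ≤ ∑ j ∈ T', deltaG g π j := by
    intro N
    induction N with
    | zero =>
      intro T' hT'
      have : T' = ∅ := Finset.card_eq_zero.mp (Nat.le_zero.mp hT')
      subst this
      simp [hg0]
    | succ N ih =>
      intro T' hT'
      rcases T'.eq_empty_or_nonempty with rfl | hne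
      · simp [hg0]
      obtain ⟨j, hjT, hmax⟩ := Finset.exists_max_image T' (fun x => π.symm x) hne
      have hjseg : T' ⊆ searchSegment π j := by
        intro x hx
        simp only [searchSegment, Finset.mem_filter, Finset.mem_univ, true_and]
        exact hmax x hx
      have hsub : T'.erase j ⊆ (searchSegment π j).erase j := by
        intro x hx
        rw [Finset.mem_erase] at hx ⊢
        exact ⟨hx.1, hjseg hx.2⟩
      have hjne : j ∉ (searchSegment π j).erase j := Finset.notMem_erase _ _
      have h1 := supermodular_insert_mono hg hsub hjne
      rw [Finset.insert_erase hjT, Finset.insert_erase (mem_searchSegment_self π j)] at h1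
      have h2 := ih (T'.erase j) (by rw [Finset.card_erase_of_mem hjT]; omega)
      rw [← Finset.add_sum_erase T' _ hjT]
      have hΔ : deltaG g π j = g (searchSegment π j) - g ((searchSegment π j).erase j) := by
        rw [deltaG, Finset.sdiff_singleton_eq_erase]
      linarith
  exact main T.card T le_rfl

/-- The first `r` elements in the order `π₁`. -/
def prefixSet {n : ℕ} (π₁ : Equiv.Perm (Fin n)) (r : ℕ) : Finset (Fin n) :=
  Finset.univ.filter (fun i => (π₁.symm i : ℕ) < r)

lemma prefixSet_zero {n : ℕ} (π₁ : Equiv.Perm (Fin n)) : prefixSet π₁ 0 = ∅ := by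
  simp [prefixSet]

lemma notMem_prefixSet {n : ℕ} (π₁ : Equiv.Perm (Fin n)) {r : ℕ} (h : r < n) :
    π₁ ⟨r, h⟩ ∉ prefixSet π₁ r := by
  simp [prefixSet]

lemma prefixSet_succ {n : ℕ} (π₁ : Equiv.Perm (Fin n)) {r : ℕ} (h : r < n) :
    prefixSet π₁ (r + 1) = insert (π₁ ⟨r, h⟩) (prefixSet π₁ r) := by
  ext i
  simp only [prefixSet, Finset.mem_filter, Finset.mem_univ, true_and, Finset.mem_insert]
  constructor
  · intro hi
    rcases Nat.lt_succ_iff_lt_or_eq.mp hi with hi | hi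
    · exact Or.inr hi
    · left
      have : π₁.symm i = ⟨r, h⟩ := Fin.ext hi
      exact (Equiv.symm_apply_eq π₁).mp this
  · rintro (rfl | hi)
    · simp
    · omega

lemma searchSegment_eq_prefixSet {n : ℕ} (π₁ : Equiv.Perm (Fin n)) {r : ℕ} (h : r < n) :
    searchSegment π₁ (π₁ ⟨r, h⟩) = prefixSet π₁ (r + 1) := by
  ext i
  simp [searchSegment, prefixSet, Fin.le_def, Nat.lt_succ_iff]

lemma searchSegment_sdiff_eq_prefixSet {n : ℕ} (π₁ : Equiv.Perm (Fin n)) {r : ℕ} (h : r < n) :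
    searchSegment π₁ (π₁ ⟨r, h⟩) \ {π₁ ⟨r, h⟩} = prefixSet π₁ r := by
  rw [searchSegment_eq_prefixSet π₁ h, prefixSet_succ π₁ h,
    Finset.sdiff_singleton_eq_erase, Finset.erase_insert (notMem_prefixSet π₁ h)]

/-- Lemma 5(i): ordering by non-increasing singleton cost approximately minimizes
`ε` up to the curvature factor. -/
theorem eps_greedy_curvature {n : ℕ} [NeZero n] (f g : Finset (Fin n) → ℝ)
    (hf : Submodular f) (hfmono : MonotoneSet f) (hf0 : f ∅ = 0)
    (hfpos : ∀ s : Fin n, 0 < f {s})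
    (hg : Supermodular g) (hgmono : MonotoneSet g) (hg0 : g ∅ = 0)
    (κf : ℝ)
    (hκf : κf = 1 - Finset.univ.inf' Finset.univ_nonempty
      (fun s : Fin n => (f Finset.univ - f (Finset.univ \ {s})) / f {s}))
    (π₁ : Equiv.Perm (Fin n))
    (hπ₁ : ∀ k l : Fin n, k ≤ l → f {π₁ l} ≤ f {π₁ k}) :
    ∀ π : Equiv.Perm (Fin n), (1 - κf) * eps f g π₁ ≤ eps f g π := by
  intro π
  have hκeq : 1 - κf = Finset.univ.inf' Finset.univ_nonempty
      (fun s : Fin n => (f Finset.univ - f (Finset.univ \ {s})) / f {s}) := by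
    rw [hκf]; ring
  -- nonnegativity of 1 - κf
  have hκ_nonneg : 0 ≤ 1 - κf := by
    rw [hκeq]
    apply Finset.le_inf' Finset.univ_nonempty
    intro s _
    apply div_nonneg _ (le_of_lt (hfpos s))
    have := hfmono (Finset.univ \ {s}) Finset.univ (Finset.sdiff_subset)
    linarith
  -- nonnegativity of the g-increments
  have hDg_nonneg : ∀ (σ : Equiv.Perm (Fin n)) (j : Fin n), 0 ≤ deltaG g σ j := by
    intro σ j
    have := hgmono (searchSegment σ j \ {j}) (searchSegment σ j) Finset.sdiff_subset
    rw [deltaG]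
    linarith
  -- the weights
  set a : ℕ → ℝ := fun m => if h : m < n then f {π₁ ⟨m, h⟩} else 0 with ha
  set c : ℕ → ℝ := fun k => a k - a (k + 1) with hc
  have hc_nonneg : ∀ k, 0 ≤ c k := by
    intro k
    by_cases hk1 : k + 1 < n
    · have hk : k < n := by omega
      have := hπ₁ ⟨k, hk⟩ ⟨k + 1, hk1⟩ (by simp [Fin.le_def])
      simp only [hc, ha, dif_pos hk1, dif_pos hk]
      linarith
    · by_cases hk : k < n
      · simp only [hc, ha, dif_neg hk1, dif_pos hk]
        have := hfpos (π₁ ⟨k, hk⟩)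
        linarith
      · simp only [hc, ha, dif_neg hk1, dif_neg hk]
        norm_num
  have han : a n = 0 := dif_neg (lt_irrefl n)
  -- the increments listed in π₁ order
  set D : Equiv.Perm (Fin n) → ℕ → ℝ :=
    fun σ m => if h : m < n then deltaG g σ (π₁ ⟨m, h⟩) else 0 with hD
  -- Abel summation
  have abel : ∀ σ : Equiv.Perm (Fin n),
      ∑ j, f {j} * deltaG g σ j = ∑ k ∈ range n, c k * ∑ m ∈ range (k + 1), D σ m := by
    intro σ
    have h1 : ∑ j, f {j} * deltaG g σ j = ∑ m ∈ range n, a m * D σ m := by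
      rw [← Equiv.sum_comp π₁ (fun j => f {j} * deltaG g σ j),
        ← Fin.sum_univ_eq_sum_range (fun m => a m * D σ m) n]
      apply Finset.sum_congr rfl
      intro i _
      simp only [ha, hD, dif_pos i.isLt, Fin.eta]
    have h2 : ∀ m, m < n → a m = ∑ k ∈ range n, (if m ≤ k then c k else 0) := by
      intro m hm
      have ht : ∀ r, ∑ k ∈ range r, c k = a 0 - a r := fun r => Finset.sum_range_sub' a r
      have hico : ∑ k ∈ Ico m n, c k = a m - a n := by
        rw [Finset.sum_Ico_eq_sub c (le_of_lt hm), ht, ht]; ring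
      have hfil : (range n).filter (fun k => m ≤ k) = Ico m n := by
        ext k
        simp only [Finset.mem_filter, Finset.mem_range, Finset.mem_Ico]
        omega
      rw [← Finset.sum_filter, hfil, hico, han]
      ring
    rw [h1]
    calc ∑ m ∈ range n, a m * D σ m
        = ∑ m ∈ range n, ∑ k ∈ range n, (if m ≤ k then c k else 0) * D σ m := by
          apply Finset.sum_congr rfl
          intro m hm
          rw [h2 m (Finset.mem_range.mp hm), Finset.sum_mul]
      _ = ∑ k ∈ range n, ∑ m ∈ range n, (if m ≤ k then c k else 0) * D σ m :=
          Finset.sum_comm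
      _ = ∑ k ∈ range n, c k * ∑ m ∈ range (k + 1), D σ m := by
          apply Finset.sum_congr rfl
          intro k hk
          have hkn : k < n := Finset.mem_range.mp hk
          have hfil : range (k + 1) = (range n).filter (fun m => m ≤ k) := by
            ext m
            simp only [Finset.mem_filter, Finset.mem_range, Nat.lt_succ_iff]
            omega
          rw [Finset.mul_sum, hfil, Finset.sum_filter]
          apply Finset.sum_congr rfl
          intro m _
          by_cases h : m ≤ k <;> simp [h]
  -- bridge: prefix sums of D equal sums over prefix sets
  have bridge : ∀ (σ : Equiv.Perm (Fin n)) (r : ℕ), r ≤ n →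
      ∑ m ∈ range r, D σ m = ∑ j ∈ prefixSet π₁ r, deltaG g σ j := by
    intro σ r
    induction r with
    | zero => intro _; simp [prefixSet_zero]
    | succ r ih =>
      intro hr
      have hrn : r < n := hr
      rw [Finset.sum_range_succ, ih (by omega), prefixSet_succ π₁ hrn,
        Finset.sum_insert (notMem_prefixSet π₁ hrn)]
      have : D σ r = deltaG g σ (π₁ ⟨r, hrn⟩) := dif_pos hrn
      rw [this]
      ring
  -- equality for π₁: prefix sums telescope to g of the prefix set
  have equalπ₁ : ∀ r : ℕ, r ≤ n → ∑ m ∈ range r, D π₁ m = g (prefixSet π₁ r) := by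
    intro r
    induction r with
    | zero => intro _; simp [prefixSet_zero, hg0]
    | succ r ih =>
      intro hr
      have hrn : r < n := hr
      rw [Finset.sum_range_succ, ih (by omega)]
      have hDr : D π₁ r = deltaG g π₁ (π₁ ⟨r, hrn⟩) := dif_pos hrn
      rw [hDr, deltaG, searchSegment_sdiff_eq_prefixSet π₁ hrn,
        searchSegment_eq_prefixSet π₁ hrn]
      ring
  -- key inequality
  have key : ∑ j, f {j} * deltaG g π₁ j ≤ ∑ j, f {j} * deltaG g π j := by
    rw [abel π₁, abel π]
    apply Finset.sum_le_sum
    intro k hk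
    have hk' : k + 1 ≤ n := Finset.mem_range.mp hk
    rw [equalπ₁ (k + 1) hk', bridge π (k + 1) hk']
    exact mul_le_mul_of_nonneg_left (sum_deltaG_ge hg hg0 π _) (hc_nonneg k)
  -- step 3: eps π₁ ≤ weighted sum for π₁
  have step3 : eps f g π₁ ≤ ∑ j, f {j} * deltaG g π₁ j := by
    apply Finset.sum_le_sum
    intro j _
    exact mul_le_mul_of_nonneg_right (delta_le_single hf hf0 π₁ j) (hDg_nonneg π₁ j)
  -- step 5: curvature lower bound for π
  have step5 : (1 - κf) * ∑ j, f {j} * deltaG g π j ≤ eps f g π := by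
    rw [Finset.mul_sum]
    apply Finset.sum_le_sum
    intro j _
    have h1 : (1 - κf) ≤ (f Finset.univ - f (Finset.univ \ {j})) / f {j} := by
      rw [hκeq]
      exact Finset.inf'_le _ (Finset.mem_univ j)
    have h2 : (1 - κf) * f {j} ≤ f Finset.univ - f (Finset.univ \ {j}) :=
      (le_div_iff₀ (hfpos j)).mp h1
    have h3 := delta_ge_curv hf π j
    rw [← mul_assoc]
    exact mul_le_mul_of_nonneg_right (by linarith) (hDg_nonneg π j)
  calc (1 - κf) * eps f g π₁
      ≤ (1 - κf) * ∑ j, f {j} * deltaG g π₁ j := mul_le_mul_of_nonneg_left step3 hκ_nonneg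
    _ ≤ (1 - κf) * ∑ j, f {j} * deltaG g π j := mul_le_mul_of_nonneg_left key hκ_nonneg
    _ ≤ eps f g π := step5
end

section
/- A set I ⊊ S is an f-initial set (i.e., I ⊆ cl({s}) for every s ∉ I, where cl(A) is the maximal superset B of A with f(B)=f(A)) if and only if for every subset A ⊆ S containing at least one element of the complement of I, f(A ∪ I) = f(A). -/
open Finset

/-- The `f`-closure of `A`: the (unique) maximal superset `B` of `A`
with `f B = f A`, i.e. the union of all such sets. -/
noncomputable def fClosure {n : ℕ} (f : Finset (Fin n) → ℝ) (A : Finset (Fin n)) : Finset (Fin n) :=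
  (Finset.univ.powerset.filter (fun B => A ⊆ B ∧ f B = f A)).sup id

/-- Characterization of `f`-initial sets. -/
theorem fInitial_iff {n : ℕ} (f : Finset (Fin n) → ℝ)
    (hf : Submodular f) (hfmono : MonotoneSet f) (hf0 : f ∅ = 0)
    (I : Finset (Fin n)) (hI : I ⊂ Finset.univ) :
    (∀ s : Fin n, s ∉ I → I ⊆ fClosure f {s}) ↔
      (∀ A : Finset (Fin n), (∃ x ∈ A, x ∉ I) → f (A ∪ I) = f A) := by
  constructor
  · intro h A ⟨x, hxA, hxI⟩
    have hsub : I ⊆ fClosure f {x} := h x hxI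
    have hxmem : ({x} : Finset (Fin n)) ⊆ fClosure f {x} := by
      apply Finset.le_sup (f := id) (b := ({x} : Finset (Fin n)))
      simp [fClosure]
    have hclp : f (fClosure f {x} ∪ {x}) = f {x} := by
      unfold fClosure
      apply Finset.sup_induction (p := fun B => f (B ∪ {x}) = f {x})
      · simp
      · intro B hB C hC
        have key := hf (B ∪ {x}) (C ∪ {x})
        have hint : f ({x} : Finset (Fin n)) ≤ f ((B ∪ {x}) ∩ (C ∪ {x})) := by
          apply hfmono
          intro a ha
          simp only [Finset.mem_singleton] at ha
          simp [ha]
        have hun : (B ∪ {x}) ∪ (C ∪ {x}) = (B ⊔ C) ∪ {x} := by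
          ext a; simp [Finset.mem_union, Finset.sup_eq_union]
        rw [hun] at key
        have hge : f ({x} : Finset (Fin n)) ≤ f ((B ⊔ C) ∪ {x}) := by
          apply hfmono; intro a ha
          simp only [Finset.mem_singleton] at ha; simp [ha]
        linarith
      · intro B hB
        simp only [Finset.mem_filter, Finset.mem_powerset] at hB
        obtain ⟨-, hsB, hfB⟩ := hB
        have : (id B : Finset (Fin n)) ∪ {x} = B := by
          simp only [id]
          exact Finset.union_eq_left.mpr hsB
        rw [this, hfB]
    have hcl : f (fClosure f {x}) = f {x} := by
      rwa [Finset.union_eq_left.mpr hxmem] at hclp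
    have hxI' : f ({x} ∪ I) = f {x} := by
      apply le_antisymm
      · calc f ({x} ∪ I) ≤ f (fClosure f {x}) := by
              apply hfmono; exact Finset.union_subset hxmem hsub
          _ = f {x} := hcl
      · apply hfmono; exact Finset.subset_union_left
    have key := hf A ({x} ∪ I)
    have hun : A ∪ ({x} ∪ I) = A ∪ I := by
      ext a; simp only [Finset.mem_union, Finset.mem_singleton]
      constructor
      · rintro (h | h | h)
        · exact Or.inl h
        · exact Or.inl (h ▸ hxA)
        · exact Or.inr h
      · tauto
    rw [hun, hxI'] at key
    have hint : f ({x} : Finset (Fin n)) ≤ f (A ∩ ({x} ∪ I)) := by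
      apply hfmono; intro a ha
      simp only [Finset.mem_singleton] at ha
      subst ha; simp [hxA]
    have hle : f A ≤ f (A ∪ I) := hfmono _ _ Finset.subset_union_left
    linarith
  · intro h s hsI
    have h1 : f ({s} ∪ I) = f {s} := by
      apply h {s}
      exact ⟨s, Finset.mem_singleton_self s, hsI⟩
    have : ({s} ∪ I : Finset (Fin n)) ⊆ fClosure f {s} := by
      apply Finset.le_sup (f := id) (b := ({s} ∪ I : Finset (Fin n)))
      simp only [Finset.mem_filter, Finset.mem_powerset]
      exact ⟨Finset.subset_univ _, Finset.subset_union_left, h1⟩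
    exact fun a ha => this (Finset.mem_union_right _ ha)
end

section
/- If I is an f-initial set, then there exists an optimal search of S (minimizing c(π) = ∑_j (g(S_j^π) − g(S_j^π − j)) f(S_j^π)) that has I as an initial segment. -/
open Finset

def pref {n : ℕ} (σ : Equiv.Perm (Fin n)) (p : Fin n) : Finset (Fin n) :=
  Finset.univ.filter (fun i => σ.symm i ≤ p)

lemma searchSegment_apply {n : ℕ} (σ : Equiv.Perm (Fin n)) (p : Fin n) :
    searchSegment σ (σ p) = pref σ p := by
  simp [searchSegment, pref]

lemma searchCost_eq {n : ℕ} (f g : Finset (Fin n) → ℝ) (σ : Equiv.Perm (Fin n)) :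
    searchCost f g σ =
      ∑ p, (g (pref σ p) - g (pref σ p \ {σ p})) * f (pref σ p) := by
  rw [searchCost, ← Equiv.sum_comp σ
    (fun j => (g (searchSegment σ j) - g (searchSegment σ j \ {j})) * f (searchSegment σ j))]
  simp [searchSegment_apply]

lemma swap_cost_le {n : ℕ} (f g : Finset (Fin n) → ℝ)
    (hfmono : MonotoneSet f) (hgmono : MonotoneSet g)
    (I : Finset (Fin n))
    (hInit : ∀ A : Finset (Fin n), (∃ x ∈ A, x ∉ I) → f (A ∪ I) = f A)
    (π : Equiv.Perm (Fin n)) (k : Fin n) (hk : (k : ℕ) + 1 < n)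
    (ha : π k ∉ I) (hb : π ⟨(k : ℕ) + 1, hk⟩ ∈ I) :
    searchCost f g ((Equiv.swap k ⟨(k : ℕ) + 1, hk⟩).trans π) ≤ searchCost f g π := by
  set k' : Fin n := ⟨(k : ℕ) + 1, hk⟩ with hk'def
  set π' : Equiv.Perm (Fin n) := (Equiv.swap k k').trans π with hπ'def
  set a : Fin n := π k with hadef
  set b : Fin n := π k' with hbdef
  have hkk' : k ≠ k' := by
    intro h; have := congrArg Fin.val h; simp [hk'def] at this
  have hka : π.symm a = k := Equiv.symm_apply_apply π k
  have hkb : π.symm b = k' := Equiv.symm_apply_apply π k'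
  have hπ'symm : ∀ i, π'.symm i = Equiv.swap k k' (π.symm i) := by
    intro i
    rw [hπ'def, Equiv.symm_trans_apply, Equiv.symm_swap]
  set A : Finset (Fin n) := pref π k with hAdef
  set B : Finset (Fin n) := pref π k' with hBdef
  set Q : Finset (Fin n) := A.erase a with hQdef
  set A' : Finset (Fin n) := insert b Q with hA'def
  have haA : a ∈ A := by
    simp only [hAdef, pref, mem_filter, mem_univ, true_and, hka, le_refl]
  have hbA : b ∉ A := by
    simp only [hAdef, pref, mem_filter, mem_univ, true_and, hkb, Fin.le_def, hk'def]
    omega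
  have hA : A = insert a Q := (Finset.insert_erase haA).symm
  have hB : B = insert b A := by
    ext i
    simp only [hBdef, hAdef, pref, mem_filter, mem_univ, true_and, mem_insert]
    rw [show (i = b) ↔ (π.symm i = k') from by rw [hbdef, Equiv.symm_apply_eq]]
    rw [Fin.le_def, Fin.le_def, Fin.ext_iff]
    simp only [hk'def]
    omega
  have haB : a ∈ B := hB ▸ mem_insert_of_mem haA
  have hbB : b ∈ B := hB ▸ mem_insert_self b A
  have hab : a ≠ b := by
    intro h
    exact hkk' (by rw [← hka, ← hkb, h])
  have hbQ : b ∉ Q := fun h => hbA (Finset.erase_subset _ _ h)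
  have haQ : a ∉ Q := Finset.notMem_erase a A
  have hBb : B.erase b = A := by rw [hB, Finset.erase_insert hbA]
  have hBa : B.erase a = A' := by
    rw [hB, hA, Finset.insert_comm, Finset.erase_insert]
    simp [Finset.mem_insert, hab, haQ]
  have hA'b : A'.erase b = Q := Finset.erase_insert hbQ
  have hπ'k : π' k = b := by
    rw [hπ'def]; simp [Equiv.swap_apply_left, hbdef]
  have hπ'k' : π' k' = a := by
    rw [hπ'def]; simp [Equiv.swap_apply_right, hadef]
  have hπ'p : ∀ p : Fin n, p ≠ k → p ≠ k' → π' p = π p := by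
    intro p h1 h2
    rw [hπ'def]; simp [Equiv.swap_apply_of_ne_of_ne h1 h2]
  -- prefix identities
  have hprefk : pref π' k = A' := by
    ext i
    simp only [pref, mem_filter, mem_univ, true_and, hπ'symm, hA'def, mem_insert]
    rw [show (i = b) ↔ (π.symm i = k') from by rw [hbdef, Equiv.symm_apply_eq]]
    rw [hQdef, Finset.mem_erase,
      show (i ≠ a) ↔ (π.symm i ≠ k) from by rw [hadef, not_iff_not, Equiv.symm_apply_eq]]
    simp only [hAdef, pref, mem_filter, mem_univ, true_and]
    rcases eq_or_ne (π.symm i) k with hx | hx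
    · rw [hx, Equiv.swap_apply_left]
      simp only [hk'def, Fin.le_def, Fin.ext_iff]
      omega
    · rcases eq_or_ne (π.symm i) k' with hx' | hx'
      · rw [hx', Equiv.swap_apply_right]
        simp
      · rw [Equiv.swap_apply_of_ne_of_ne hx hx']
        simp [hx, hx']
  have hprefk' : pref π' k' = B := by
    ext i
    simp only [pref, mem_filter, mem_univ, true_and, hπ'symm, hBdef]
    rcases eq_or_ne (π.symm i) k with hx | hx
    · rw [hx, Equiv.swap_apply_left]
      simp only [hk'def, Fin.le_def]
      omega
    · rcases eq_or_ne (π.symm i) k' with hx' | hx'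
      · rw [hx', Equiv.swap_apply_right]
        simp only [hk'def, Fin.le_def]
        omega
      · rw [Equiv.swap_apply_of_ne_of_ne hx hx']
  have hprefp : ∀ p : Fin n, p ≠ k → p ≠ k' → pref π' p = pref π p := by
    intro p h1 h2
    ext i
    simp only [pref, mem_filter, mem_univ, true_and, hπ'symm]
    have hpk : (p : ℕ) ≠ (k : ℕ) := fun h => h1 (Fin.ext h)
    rcases eq_or_ne (π.symm i) k with hx | hx
    · rw [hx, Equiv.swap_apply_left]
      rw [Fin.le_def, Fin.le_def]; simp only [hk'def]; omega
    · rcases eq_or_ne (π.symm i) k' with hx' | hx'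
      · rw [hx', Equiv.swap_apply_right]
        rw [Fin.le_def, Fin.le_def]; simp only [hk'def]; omega
      · rw [Equiv.swap_apply_of_ne_of_ne hx hx']
  -- f and g facts
  have hfBA : f B = f A := by
    have h1 := hInit B ⟨a, haB, ha⟩
    have h2 := hInit A ⟨a, haA, ha⟩
    have hU : B ∪ I = A ∪ I := by
      rw [hB, Finset.insert_union]
      exact Finset.insert_eq_self.mpr (mem_union_right _ hb)
    rw [← h1, ← h2, hU]
  have hA'B : A' ⊆ B := by
    rw [hA'def, hB]
    exact Finset.insert_subset_insert b (Finset.erase_subset a A)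
  have hfA'A : f A' ≤ f A := hfBA ▸ hfmono _ _ hA'B
  have hgQA' : g Q ≤ g A' := hgmono _ _ (Finset.subset_insert b Q)
  -- cost comparison
  rw [searchCost_eq, searchCost_eq]
  have split : ∀ t : Fin n → ℝ,
      ∑ p, t p = ∑ p ∈ Finset.univ \ {k, k'}, t p + (t k + t k') := by
    intro t
    rw [← Finset.sum_sdiff (Finset.subset_univ {k, k'}), Finset.sum_pair hkk']
  rw [split, split]
  have hcongr : ∑ p ∈ Finset.univ \ {k, k'},
        (g (pref π' p) - g (pref π' p \ {π' p})) * f (pref π' p)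
      = ∑ p ∈ Finset.univ \ {k, k'},
        (g (pref π p) - g (pref π p \ {π p})) * f (pref π p) := by
    apply Finset.sum_congr rfl
    intro p hp
    simp only [Finset.mem_sdiff, Finset.mem_insert, Finset.mem_singleton, mem_univ,
      true_and, not_or] at hp
    rw [hprefp p hp.1 hp.2, hπ'p p hp.1 hp.2]
  rw [hcongr]
  have hpair :
      (g (pref π' k) - g (pref π' k \ {π' k})) * f (pref π' k)
        + (g (pref π' k') - g (pref π' k' \ {π' k'})) * f (pref π' k')
      ≤ (g (pref π k) - g (pref π k \ {π k})) * f (pref π k)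
        + (g (pref π k') - g (pref π k' \ {π k'})) * f (pref π k') := by
    rw [hprefk, hprefk', hπ'k, hπ'k', ← Finset.erase_eq, ← Finset.erase_eq,
      ← Finset.erase_eq, ← Finset.erase_eq, hA'b, hBa, ← hadef, ← hbdef, ← hAdef, ← hBdef,
      hBb, ← hQdef, hfBA]
    nlinarith [mul_le_mul_of_nonneg_left hfA'A (sub_nonneg.mpr hgQA')]
  linarith

/-- Lemma 6 (first case): an `f`-initial set is an initial segment of some
optimal search. -/
theorem fInitial_optimal_initial_segment {n : ℕ} (f g : Finset (Fin n) → ℝ)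
    (hf : Submodular f) (hfmono : MonotoneSet f) (hf0 : f ∅ = 0)
    (hfpos : ∀ A : Finset (Fin n), A.Nonempty → 0 < f A)
    (hg : Supermodular g) (hgmono : MonotoneSet g) (hg0 : g ∅ = 0)
    (hgnonneg : ∀ A : Finset (Fin n), 0 ≤ g A)
    (I : Finset (Fin n)) (hI : I ⊂ Finset.univ)
    (hInit : ∀ A : Finset (Fin n), (∃ x ∈ A, x ∉ I) → f (A ∪ I) = f A) :
    ∃ π : Equiv.Perm (Fin n),
      (∀ τ : Equiv.Perm (Fin n), searchCost f g π ≤ searchCost f g τ) ∧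
      InitialSegmentOf π I := by
  classical
  obtain ⟨π₀, -, hπ₀⟩ := Finset.exists_min_image (Finset.univ : Finset (Equiv.Perm (Fin n)))
    (searchCost f g) ⟨1, Finset.mem_univ 1⟩
  set T : Finset (Equiv.Perm (Fin n)) :=
    Finset.univ.filter (fun σ => searchCost f g σ = searchCost f g π₀) with hT
  have hπ₀T : π₀ ∈ T := by simp [hT]
  obtain ⟨π, hπT, hπmin⟩ := Finset.exists_min_image T
    (fun σ => ∑ j ∈ I, ((σ.symm j : Fin n) : ℕ)) ⟨π₀, hπ₀T⟩
  have hπcost : searchCost f g π = searchCost f g π₀ := by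
    simp only [hT, Finset.mem_filter, Finset.mem_univ, true_and] at hπT
    exact hπT
  refine ⟨π, fun τ => ?_, ?_⟩
  · rw [hπcost]; exact hπ₀ τ (Finset.mem_univ τ)
  by_contra hnot
  have hadj : ∃ (k : Fin n) (hk : (k : ℕ) + 1 < n),
      π k ∉ I ∧ π ⟨(k : ℕ) + 1, hk⟩ ∈ I := by
    by_contra hcon
    push_neg at hcon
    have mono : ∀ (r q : ℕ) (h : q < n) (hq : q + r < n),
        π ⟨q, h⟩ ∉ I → π ⟨q + r, hq⟩ ∉ I := by
      intro r
      induction r with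
      | zero => intro q h hq hh; exact hh
      | succ r ih =>
        intro q h hq hh
        have h1 : q + r < n := by omega
        exact hcon ⟨q + r, h1⟩ hq (ih q h h1 hh)
    apply hnot
    intro i j hj hle
    by_contra hi
    set p := π.symm i with hpdef
    set q := π.symm j with hqdef
    have hple : (p : ℕ) ≤ (q : ℕ) := hle
    have hqlt : (q : ℕ) < n := q.isLt
    have hpf : (p : ℕ) + ((q : ℕ) - (p : ℕ)) < n := by omega
    have h1 : π ⟨(p : ℕ), p.isLt⟩ ∉ I := by simpa [hpdef] using hi
    have h2 := mono ((q : ℕ) - (p : ℕ)) (p : ℕ) p.isLt hpf h1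
    have heq : (⟨(p : ℕ) + ((q : ℕ) - (p : ℕ)), hpf⟩ : Fin n) = q := by
      apply Fin.ext; simp; omega
    rw [heq, hqdef, Equiv.apply_symm_apply] at h2
    exact h2 hj
  obtain ⟨k, hk, ha, hb⟩ := hadj
  set k' : Fin n := ⟨(k : ℕ) + 1, hk⟩ with hk'def
  set π' : Equiv.Perm (Fin n) := (Equiv.swap k k').trans π with hπ'def
  have hcost' : searchCost f g π' ≤ searchCost f g π :=
    swap_cost_le f g hfmono hgmono I hInit π k hk ha hb
  have hπ'T : π' ∈ T := by
    simp only [hT, Finset.mem_filter, Finset.mem_univ, true_and]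
    have h0 := hπ₀ π' (Finset.mem_univ π')
    linarith [hπcost]
  have hπ'symm : ∀ i, π'.symm i = Equiv.swap k k' (π.symm i) := by
    intro i; rw [hπ'def, Equiv.symm_trans_apply, Equiv.symm_swap]
  have hlt : (∑ j ∈ I, ((π'.symm j : Fin n) : ℕ)) < ∑ j ∈ I, ((π.symm j : Fin n) : ℕ) := by
    apply Finset.sum_lt_sum
    · intro j hj
      rw [hπ'symm]
      have hx : π.symm j ≠ k := by
        intro h
        exact ha (by rw [show π k = j from by rw [← h, Equiv.apply_symm_apply]]; exact hj)
      rcases eq_or_ne (π.symm j) k' with hx' | hx'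
      · rw [hx', Equiv.swap_apply_right]
        simp only [hk'def]
        omega
      · rw [Equiv.swap_apply_of_ne_of_ne hx hx']
    · refine ⟨π k', hb, ?_⟩
      rw [hπ'symm, Equiv.symm_apply_apply, Equiv.swap_apply_right]
      simp only [hk'def]
      omega
  have := hπmin π' hπ'T
  omega
end

section
/- Suppose B ⊆ S is a separator of both f and g, i.e., f(A) = f(A∩B) + f(A∩B̄) and g(A) = g(A∩B) + g(A∩B̄) for all A. If A is a set of maximum density, then A∩B (if nonempty) has maximum density and A∩B̄ (if nonempty) has maximum density. Hence the lattice of maximum-density sets is the direct sum of its restrictions to B and to B̄. -/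
open Finset

def MaxDensity {n : ℕ} (f g : Finset (Fin n) → ℝ) (A : Finset (Fin n)) : Prop :=
  A.Nonempty ∧ ∀ C : Finset (Fin n), C.Nonempty → g C / f C ≤ g A / f A

/-- Lemma 7: if `B` separates both `f` and `g`, then intersecting a maximum
density set with `B` or its complement preserves maximum density. -/
theorem separator_maxDensity {n : ℕ} (f g : Finset (Fin n) → ℝ)
    (hf : Submodular f) (hfmono : MonotoneSet f) (hf0 : f ∅ = 0)
    (hfpos : ∀ A : Finset (Fin n), A.Nonempty → 0 < f A)
    (hg : Supermodular g) (hgmono : MonotoneSet g) (hg0 : g ∅ = 0)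
    (hgnonneg : ∀ A : Finset (Fin n), 0 ≤ g A)
    (B : Finset (Fin n)) (hB : B.Nonempty) (hBne : B ≠ Finset.univ)
    (hfsep : ∀ A : Finset (Fin n), f A = f (A ∩ B) + f (A ∩ Bᶜ))
    (hgsep : ∀ A : Finset (Fin n), g A = g (A ∩ B) + g (A ∩ Bᶜ))
    (A : Finset (Fin n)) (hA : MaxDensity f g A) :
    ((A ∩ B).Nonempty → MaxDensity f g (A ∩ B)) ∧
      ((A ∩ Bᶜ).Nonempty → MaxDensity f g (A ∩ Bᶜ)) := by
  obtain ⟨hAne, hmax⟩ := hA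
  set ρ := g A / f A with hρ
  have hfA : 0 < f A := hfpos A hAne
  have key : ∀ C : Finset (Fin n), g C ≤ ρ * f C := by
    intro C
    rcases C.eq_empty_or_nonempty with rfl | hC
    · simp [hf0, hg0]
    · have := hmax C hC
      have hfC := hfpos C hC
      calc g C = (g C / f C) * f C := by field_simp
        _ ≤ ρ * f C := by nlinarith
  have hgA : g A = ρ * f A := by rw [hρ, div_mul_cancel₀ _ hfA.ne']
  have hsum : g (A ∩ B) + g (A ∩ Bᶜ) = ρ * f (A ∩ B) + ρ * f (A ∩ Bᶜ) := by
    rw [← hgsep A, hgA, hfsep A]; ring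
  have h1 := key (A ∩ B)
  have h2 := key (A ∩ Bᶜ)
  have e1 : g (A ∩ B) = ρ * f (A ∩ B) := by linarith
  have e2 : g (A ∩ Bᶜ) = ρ * f (A ∩ Bᶜ) := by linarith
  constructor
  · intro hne
    refine ⟨hne, fun C hC => ?_⟩
    have hfpos1 := hfpos _ hne
    have : g (A ∩ B) / f (A ∩ B) = ρ := by rw [e1]; field_simp
    rw [this]; exact hmax C hC
  · intro hne
    refine ⟨hne, fun C hC => ?_⟩
    have hfpos1 := hfpos _ hne
    have : g (A ∩ Bᶜ) / f (A ∩ Bᶜ) = ρ := by rw [e2]; field_simp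
    rw [this]; exact hmax C hC
end

section
/- A proper nonempty subset B ⊆ S is a separator of a submodular function f with f(∅)=0 (meaning f(A) = f(A∩B) + f(A∩B̄) for all A ⊆ S) if and only if f(S) = f(B) + f(B̄). -/
open Finset

/-- A proper nonempty subset `B` is a separator of a submodular `f` iff
`f(S) = f(B) + f(S \ B)`. -/
theorem separator_iff {n : ℕ} (f : Finset (Fin n) → ℝ)
    (hf : Submodular f) (hf0 : f ∅ = 0)
    (B : Finset (Fin n)) (hB : B.Nonempty) (hBne : B ≠ Finset.univ) :
    (∀ A : Finset (Fin n), f A = f (A ∩ B) + f (A ∩ Bᶜ)) ↔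
      f Finset.univ = f B + f Bᶜ := by
  constructor
  · intro h
    have := h Finset.univ
    simpa using this
  · intro h A
    have h1 := hf (A ∩ B) (A ∩ Bᶜ)
    have e1 : (A ∩ B) ∪ (A ∩ Bᶜ) = A := by
      ext x; simp [Finset.mem_union, Finset.mem_inter]; tauto
    have e2 : (A ∩ B) ∩ (A ∩ Bᶜ) = ∅ := by
      ext x; simp [Finset.mem_inter]; tauto
    rw [e1, e2, hf0] at h1
    have h2 := hf B (A ∪ Bᶜ)
    have e3 : B ∪ (A ∪ Bᶜ) = Finset.univ := by
      ext x; simp [Finset.mem_union]; tauto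
    have e4 : B ∩ (A ∪ Bᶜ) = A ∩ B := by
      ext x; simp [Finset.mem_inter, Finset.mem_union]; tauto
    rw [e3, e4] at h2
    have h3 := hf A Bᶜ
    have e5 : A ∪ Bᶜ ∪ ∅ = A ∪ Bᶜ := by simp
    have h4 : f (A ∪ Bᶜ) + f (A ∩ Bᶜ) ≤ f A + f Bᶜ := by
      simpa using h3
    linarith
end
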